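/- arXiv:2303.14591 — 7 statements merged into one kernel-verified Lean document; each statement's English description precedes it below -/
import Mathlib

section
/- Let V be a finite set of nodes partitioned by a binary sensitive attribute s : V → {0,1} into nonempty groups S₀ and S₁. Let each node k ∈ V have a nonempty neighborhood N(k) ⊆ V and attention coefficients α_{kj} ≥ 0 for j ∈ N(k) satisfying Σ_{j∈N(k)} α_{kj} = 1. Let W ∈ ℝ^{F'×F}, let h_j ∈ ℝ^F be input representations, c_j = W h_j ∈ ℝ^{F'}, z_k = Σ_{j∈N(k)} α_{kj} c_j, and h'_k = σ(z_k) with σ : ℝ → ℝ an L-Lipschitz activation applied entrywise. Let S^χ be the set of nodes having at least one neighbor of the opposite sensitive group, S_s^χ = S_s ∩ S^χ, and R_s^χ = |S_s^χ|/|S_s| for s = 0,1. Assume (A1) ‖c_j − c̄_{s(j)}‖_∞ ≤ Δc and ‖z_j − z̄_{s(j)}‖_∞ ≤ Δz for every j ∈ V, and (A2) there exists α^χ ∈ [0,1] such that for every node k ∈ S^χ, Σ_{j∈N(k), s(j)≠s(k)} α_{kj} = α^χ. Then the disparity of the output representations satisfies ‖h̄'₀ − h̄'₁‖₂ ≤ L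 ( σmax(W) · |R₁^χ α^χ + R₀^χ α^χ − 1| · ‖h̄₀ − h̄₁‖₂ + 2√(F') Δc + 2√(F') Δz ). -/
open Finset

/-- Group mean of vectors over a finite index set. -/
noncomputable def gmean {V : Type*} {d : ℕ} (S : Finset V)
    (x : V → EuclideanSpace ℝ (Fin d)) : EuclideanSpace ℝ (Fin d) :=
  (S.card : ℝ)⁻¹ • ∑ j ∈ S, x j

/-- The sensitive group of nodes with sensitive attribute `t`. -/
def grp {V : Type*} [Fintype V] (s : V → Fin 2) (t : Fin 2) : Finset V :=
  Finset.univ.filter fun j => s j = t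

noncomputable def evec {n : ℕ} (f : Fin n → ℝ) : EuclideanSpace ℝ (Fin n) :=
  (WithLp.equiv 2 (Fin n → ℝ)).symm f

lemma evec_apply {n : ℕ} (f : Fin n → ℝ) (i : Fin n) : evec f i = f i := rfl

lemma esum_apply {V : Type*} {d : ℕ} (S : Finset V) (x : V → EuclideanSpace ℝ (Fin d)) (i : Fin d) :
    (∑ j ∈ S, x j) i = ∑ j ∈ S, x j i := by
  classical
  induction S using Finset.induction with
  | empty => rfl
  | insert _ _ hnotmem ih => rw [Finset.sum_insert hnotmem, Finset.sum_insert hnotmem, PiLp.add_apply, ih]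

lemma gmean_apply {V : Type*} {d : ℕ} (S : Finset V) (x : V → EuclideanSpace ℝ (Fin d)) (i : Fin d) :
    gmean S x i = (S.card : ℝ)⁻¹ * ∑ j ∈ S, x j i := by
  rw [gmean, PiLp.smul_apply, esum_apply, smul_eq_mul]

lemma euclid_norm_const {n : ℕ} (B : ℝ) (hB : 0 ≤ B) :
    ‖evec (fun _ => B : Fin n → ℝ)‖ = Real.sqrt n * B := by
  rw [EuclideanSpace.norm_eq]
  have : ∀ i : Fin n, ‖evec (fun _ => B : Fin n → ℝ) i‖ ^ 2 = B ^ 2 := by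
    intro i; rw [evec_apply, Real.norm_eq_abs, sq_abs]
  rw [Finset.sum_congr rfl (fun i _ => this i), Finset.sum_const, Finset.card_univ,
    Fintype.card_fin, nsmul_eq_mul, Real.sqrt_mul (by positivity), Real.sqrt_sq hB]

lemma euclid_norm_abs {n : ℕ} (y : EuclideanSpace ℝ (Fin n)) :
    ‖evec (fun i => |y i|)‖ = ‖y‖ := by
  rw [EuclideanSpace.norm_eq, EuclideanSpace.norm_eq]
  congr 1
  exact Finset.sum_congr rfl fun i _ => by
    rw [evec_apply, Real.norm_eq_abs, Real.norm_eq_abs, abs_abs]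

lemma euclid_norm_mono {n : ℕ} (x : EuclideanSpace ℝ (Fin n)) (w : EuclideanSpace ℝ (Fin n))
    (hpt : ∀ i, |x i| ≤ w i) : ‖x‖ ≤ ‖w‖ := by
  rw [EuclideanSpace.norm_eq, EuclideanSpace.norm_eq]
  apply Real.sqrt_le_sqrt
  apply Finset.sum_le_sum
  intro i _
  have h1 : ‖x i‖ ≤ ‖w i‖ := by
    rw [Real.norm_eq_abs, Real.norm_eq_abs]
    exact (hpt i).trans (le_abs_self _)
  exact pow_le_pow_left₀ (norm_nonneg _) h1 2

lemma euclid_norm_le_of_pointwise {n : ℕ} (x y : EuclideanSpace ℝ (Fin n)) (A B : ℝ)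
    (hA : 0 ≤ A) (hB : 0 ≤ B) (hpt : ∀ i, |x i| ≤ A * |y i| + B) :
    ‖x‖ ≤ A * ‖y‖ + Real.sqrt n * B := by
  have hw : ‖x‖ ≤ ‖A • evec (fun i => |y i|) + evec (fun _ => B)‖ := by
    apply euclid_norm_mono
    intro i
    have : (A • evec (fun i => |y i|) + evec (fun _ => B) : EuclideanSpace ℝ (Fin n)) i
        = A * |y i| + B := by
      rw [PiLp.add_apply, PiLp.smul_apply, evec_apply, evec_apply, smul_eq_mul]
    rw [this]; exact hpt i
  refine hw.trans ((norm_add_le _ _).trans ?_)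
  rw [norm_smul, Real.norm_eq_abs, abs_of_nonneg hA, euclid_norm_abs, euclid_norm_const B hB]

set_option maxHeartbeats 1000000

/-- Theorem 1: disparity bound for a GAT layer. `Sχ` is the set of nodes having at least one
neighbor of the opposite sensitive group, `αχ` the common total attention on inter-edges (A2),
and `Δc`, `Δz` the maximal deviations of assumption A1. The linear map `W` between Euclidean
spaces plays the role of the weight matrix and `‖W‖` is its largest singular value. -/
theorem gat_layer_disparity_bound
    {V : Type*} [Fintype V] [DecidableEq V] {F F' : ℕ}
    (s : V → Fin 2)
    (hS₀ : (grp s 0).Nonempty) (hS₁ : (grp s 1).Nonempty)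
    (N : V → Finset V) (hN : ∀ k, (N k).Nonempty)
    (α : V → V → ℝ) (hαnn : ∀ k, ∀ j ∈ N k, 0 ≤ α k j)
    (hαsum : ∀ k, ∑ j ∈ N k, α k j = 1)
    (W : EuclideanSpace ℝ (Fin F) →L[ℝ] EuclideanSpace ℝ (Fin F'))
    (h : V → EuclideanSpace ℝ (Fin F))
    (c : V → EuclideanSpace ℝ (Fin F')) (hc : ∀ j, c j = W (h j))
    (z : V → EuclideanSpace ℝ (Fin F')) (hz : ∀ k, z k = ∑ j ∈ N k, α k j • c j)
    (σ : ℝ → ℝ) (L : ℝ) (hσ : ∀ a b, |σ a - σ b| ≤ L * |a - b|)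
    (h' : V → EuclideanSpace ℝ (Fin F')) (hh' : ∀ k i, h' k i = σ (z k i))
    (Δc Δz : ℝ)
    (hΔc : ∀ j, ∀ i, |c j i - gmean (grp s (s j)) c i| ≤ Δc)
    (hΔz : ∀ j, ∀ i, |z j i - gmean (grp s (s j)) z i| ≤ Δz)
    (Sχ : Finset V) (hSχ : ∀ k, k ∈ Sχ ↔ ∃ j ∈ N k, s j ≠ s k)
    (αχ : ℝ) (hαχ0 : 0 ≤ αχ) (hαχ1 : αχ ≤ 1)
    (hA2 : ∀ k ∈ Sχ, ∑ j ∈ (N k).filter (fun j => s j ≠ s k), α k j = αχ) :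
    ‖gmean (grp s 0) h' - gmean (grp s 1) h'‖ ≤
      L * (‖W‖ *
            |((grp s 1 ∩ Sχ).card : ℝ) / ((grp s 1).card : ℝ) * αχ
              + ((grp s 0 ∩ Sχ).card : ℝ) / ((grp s 0).card : ℝ) * αχ - 1|
            * ‖gmean (grp s 0) h - gmean (grp s 1) h‖
          + 2 * Real.sqrt F' * Δc + 2 * Real.sqrt F' * Δz) := by
  classical
  have fin2 : ∀ a b x : Fin 2, a ≠ b → x ≠ a → x = b := by decide
  have hL : 0 ≤ L := le_trans (abs_nonneg _) (by simpa using hσ 0 1)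
  have hmem : ∀ (t : Fin 2) (k : V), k ∈ grp s t ↔ s k = t := by
    intro t k; simp [grp]
  by_cases hF : F' = 0
  · subst hF
    have hzero : gmean (grp s 0) h' - gmean (grp s 1) h' = 0 := Subsingleton.elim _ _
    rw [hzero, norm_zero]
    have h0 : Real.sqrt ((0 : ℕ) : ℝ) = 0 := by norm_num
    rw [h0]
    have : (0:ℝ) ≤ ‖W‖ * |((grp s 1 ∩ Sχ).card : ℝ) / ((grp s 1).card : ℝ) * αχ
              + ((grp s 0 ∩ Sχ).card : ℝ) / ((grp s 0).card : ℝ) * αχ - 1|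
            * ‖gmean (grp s 0) h - gmean (grp s 1) h‖ := by positivity
    nlinarith
  -- main case
  have i₀ : Fin F' := ⟨0, Nat.pos_of_ne_zero hF⟩
  have hΔc0 : 0 ≤ Δc := le_trans (abs_nonneg _) (hΔc hS₀.choose i₀)
  have hΔz0 : 0 ≤ Δz := le_trans (abs_nonneg _) (hΔz hS₀.choose i₀)
  -- mean of z over a group
  have meanz : ∀ t u : Fin 2, t ≠ u → (grp s t).Nonempty →
      ∀ i : Fin F', |gmean (grp s t) z i -
        ((1 - ((grp s t ∩ Sχ).card : ℝ) / ((grp s t).card : ℝ) * αχ) * gmean (grp s t) c i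
          + ((grp s t ∩ Sχ).card : ℝ) / ((grp s t).card : ℝ) * αχ * gmean (grp s u) c i)|
        ≤ Δc := by
    intro t u htu hne i
    have hnpos : (0:ℝ) < ((grp s t).card : ℝ) := by exact_mod_cast Finset.card_pos.2 hne
    set n : ℝ := ((grp s t).card : ℝ) with hndef
    set ct : ℝ := gmean (grp s t) c i with hct
    set cu : ℝ := gmean (grp s u) c i with hcu
    set β : V → ℝ := fun k => ∑ j ∈ (N k).filter (fun j => s j ≠ s k), α k j with hβ
    set e : V → ℝ := fun k => ∑ j ∈ N k, α k j * (c j i - gmean (grp s (s j)) c i) with he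
    -- expansion of z k i
    have hzi : ∀ k ∈ grp s t, z k i = (1 - β k) * ct + β k * cu + e k := by
      intro k hk
      have hsk : s k = t := (hmem t k).1 hk
      have h1 : z k i = ∑ j ∈ N k, α k j * c j i := by
        rw [hz k, esum_apply]
        exact Finset.sum_congr rfl fun j _ => by rw [PiLp.smul_apply, smul_eq_mul]
      have hsplit : ∑ j ∈ N k, α k j * gmean (grp s (s j)) c i = β k * cu + (1 - β k) * ct := by
        rw [← Finset.sum_filter_add_sum_filter_not (N k) (fun j => s j ≠ s k)
          (fun j => α k j * gmean (grp s (s j)) c i)]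
        have hA : ∑ j ∈ (N k).filter (fun j => s j ≠ s k),
            α k j * gmean (grp s (s j)) c i = β k * cu := by
          rw [hβ, Finset.sum_mul]
          refine Finset.sum_congr rfl fun j hj => ?_
          have hj' := Finset.mem_filter.1 hj
          have hsj : s j = u := by
            have h5 := hj'.2; rw [hsk] at h5
            exact fin2 t u (s j) htu h5
          rw [hsj]
        have hB : ∑ j ∈ (N k).filter (fun j => ¬ s j ≠ s k),
            α k j * gmean (grp s (s j)) c i = (1 - β k) * ct := by
          have hsum' : ∑ j ∈ (N k).filter (fun j => ¬ s j ≠ s k), α k j = 1 - β k := by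
            have := Finset.sum_filter_add_sum_filter_not (N k) (fun j => s j ≠ s k) (fun j => α k j)
            rw [hαsum k] at this
            rw [hβ]; linarith
          rw [← hsum', Finset.sum_mul]
          refine Finset.sum_congr rfl fun j hj => ?_
          have hj' := Finset.mem_filter.1 hj
          have hsj : s j = t := by
            have := hj'.2; simp only [not_not] at this; rw [this, hsk]
          rw [hsj]
        rw [hA, hB]
      have h2 : e k = (∑ j ∈ N k, α k j * c j i)
          - ∑ j ∈ N k, α k j * gmean (grp s (s j)) c i := by
        rw [he, ← Finset.sum_sub_distrib]
        exact Finset.sum_congr rfl fun j _ => by ring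
      rw [h1]
      have := h2
      rw [hsplit] at this
      linarith
    -- bound on e
    have hebound : ∀ k : V, |e k| ≤ Δc := by
      intro k
      rw [he]
      calc |∑ j ∈ N k, α k j * (c j i - gmean (grp s (s j)) c i)|
          ≤ ∑ j ∈ N k, |α k j * (c j i - gmean (grp s (s j)) c i)| :=
            Finset.abs_sum_le_sum_abs _ _
        _ ≤ ∑ j ∈ N k, α k j * Δc := by
            refine Finset.sum_le_sum fun j hj => ?_
            rw [abs_mul, abs_of_nonneg (hαnn k j hj)]
            exact mul_le_mul_of_nonneg_left (hΔc j i) (hαnn k j hj)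
        _ = Δc := by rw [← Finset.sum_mul, hαsum k, one_mul]
    -- β values
    have hβval : ∀ k : V, β k = if k ∈ Sχ then αχ else 0 := by
      intro k
      by_cases hk : k ∈ Sχ
      · rw [if_pos hk, hβ]; exact hA2 k hk
      · rw [if_neg hk, hβ]
        refine Finset.sum_eq_zero fun j hj => ?_
        exfalso
        exact hk ((hSχ k).2 ⟨j, (Finset.mem_filter.1 hj).1, (Finset.mem_filter.1 hj).2⟩)
    have hβsum : ∑ k ∈ grp s t, β k = ((grp s t ∩ Sχ).card : ℝ) * αχ := by
      rw [Finset.sum_congr rfl fun k _ => hβval k, Finset.sum_ite_mem,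
        Finset.sum_const, nsmul_eq_mul]
    -- mean of z
    set C : ℝ := ((grp s t ∩ Sχ).card : ℝ) with hC
    set E : ℝ := ∑ k ∈ grp s t, e k with hE
    have hkey : gmean (grp s t) z i = n⁻¹ * ((n - C * αχ) * ct + (C * αχ) * cu + E) := by
      rw [gmean_apply]
      congr 1
      rw [Finset.sum_congr rfl hzi, Finset.sum_add_distrib, Finset.sum_add_distrib,
        ← Finset.sum_mul, ← Finset.sum_mul, Finset.sum_sub_distrib, Finset.sum_const,
        nsmul_eq_mul, mul_one, hβsum]
      try rw [hE, hC, hndef]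
      try ring
    have hEbound : |E| ≤ n * Δc := by
      rw [hE]
      calc |∑ k ∈ grp s t, e k| ≤ ∑ k ∈ grp s t, |e k| := Finset.abs_sum_le_sum_abs _ _
        _ ≤ ∑ _k ∈ grp s t, Δc := Finset.sum_le_sum fun k _ => hebound k
        _ = n * Δc := by rw [Finset.sum_const, nsmul_eq_mul, hndef]
    have hdiff : gmean (grp s t) z i
        - ((1 - C / n * αχ) * ct + C / n * αχ * cu) = n⁻¹ * E := by
      rw [hkey]
      field_simp
      try ring
    rw [hdiff, abs_mul, abs_of_nonneg (by positivity : (0:ℝ) ≤ n⁻¹)]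
    calc n⁻¹ * |E| ≤ n⁻¹ * (n * Δc) :=
          mul_le_mul_of_nonneg_left hEbound (by positivity)
      _ = Δc := by field_simp
  -- Lipschitz mean
  have meanh' : ∀ t : Fin 2, (grp s t).Nonempty → ∀ i : Fin F',
      |gmean (grp s t) h' i - σ (gmean (grp s t) z i)| ≤ L * Δz := by
    intro t hne i
    have hnpos : (0:ℝ) < ((grp s t).card : ℝ) := by exact_mod_cast Finset.card_pos.2 hne
    set n : ℝ := ((grp s t).card : ℝ) with hndef
    have h1 : gmean (grp s t) h' i - σ (gmean (grp s t) z i)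
        = n⁻¹ * ∑ k ∈ grp s t, (σ (z k i) - σ (gmean (grp s t) z i)) := by
      rw [gmean_apply, Finset.sum_sub_distrib, Finset.sum_const, nsmul_eq_mul,
        Finset.sum_congr rfl fun k _ => (hh' k i).symm]
      rw [hndef]
      field_simp
      try ring
    rw [h1, abs_mul, abs_of_nonneg (by positivity : (0:ℝ) ≤ n⁻¹)]
    have h2 : |∑ k ∈ grp s t, (σ (z k i) - σ (gmean (grp s t) z i))| ≤ n * (L * Δz) := by
      calc |∑ k ∈ grp s t, (σ (z k i) - σ (gmean (grp s t) z i))|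
          ≤ ∑ k ∈ grp s t, |σ (z k i) - σ (gmean (grp s t) z i)| :=
            Finset.abs_sum_le_sum_abs _ _
        _ ≤ ∑ _k ∈ grp s t, L * Δz := by
            refine Finset.sum_le_sum fun k hk => ?_
            refine (hσ _ _).trans ?_
            have hsk : s k = t := (hmem t k).1 hk
            have := hΔz k i
            rw [hsk] at this
            exact mul_le_mul_of_nonneg_left this hL
        _ = n * (L * Δz) := by rw [Finset.sum_const, nsmul_eq_mul, hndef]
    calc n⁻¹ * |∑ k ∈ grp s t, (σ (z k i) - σ (gmean (grp s t) z i))|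
        ≤ n⁻¹ * (n * (L * Δz)) := mul_le_mul_of_nonneg_left h2 (by positivity)
      _ = L * Δz := by field_simp
  -- pointwise bound
  set R0 : ℝ := ((grp s 0 ∩ Sχ).card : ℝ) / ((grp s 0).card : ℝ) with hR0
  set R1 : ℝ := ((grp s 1 ∩ Sχ).card : ℝ) / ((grp s 1).card : ℝ) with hR1
  set A : ℝ := L * |R1 * αχ + R0 * αχ - 1| with hA
  set B : ℝ := 2 * L * Δc + 2 * L * Δz with hB
  have hpt : ∀ i : Fin F',
      |(gmean (grp s 0) h' - gmean (grp s 1) h') i|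
        ≤ A * |(gmean (grp s 0) c - gmean (grp s 1) c) i| + B := by
    intro i
    have p0 := meanh' 0 hS₀ i
    have p1 := meanh' 1 hS₁ i
    have q := hσ (gmean (grp s 0) z i) (gmean (grp s 1) z i)
    have m0 := meanz 0 1 (by decide) hS₀ i
    have m1 := meanz 1 0 (by decide) hS₁ i
    rw [← hR0] at m0
    rw [← hR1] at m1
    set zb0 := gmean (grp s 0) z i
    set zb1 := gmean (grp s 1) z i
    set c0 := gmean (grp s 0) c i
    set c1 := gmean (grp s 1) c i
    set X0 : ℝ := (1 - R0 * αχ) * c0 + R0 * αχ * c1 with hX0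
    set X1 : ℝ := (1 - R1 * αχ) * c1 + R1 * αχ * c0 with hX1
    have hid : zb0 - zb1 = (1 - R0 * αχ - R1 * αχ) * (c0 - c1) + ((zb0 - X0) - (zb1 - X1)) := by
      rw [hX0, hX1]; ring
    have h2 : |zb0 - zb1| ≤ |1 - R0 * αχ - R1 * αχ| * |c0 - c1| + 2 * Δc := by
      calc |zb0 - zb1|
          = |(1 - R0 * αχ - R1 * αχ) * (c0 - c1) + ((zb0 - X0) - (zb1 - X1))| := by rw [← hid]
        _ ≤ |(1 - R0 * αχ - R1 * αχ) * (c0 - c1)| + |(zb0 - X0) - (zb1 - X1)| := abs_add_le _ _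
        _ ≤ |1 - R0 * αχ - R1 * αχ| * |c0 - c1| + (|zb0 - X0| + |zb1 - X1|) := by
            rw [abs_mul]
            exact add_le_add le_rfl (abs_sub _ _)
        _ ≤ |1 - R0 * αχ - R1 * αχ| * |c0 - c1| + 2 * Δc := by
            have := add_le_add m0 m1
            linarith
    have habs : |1 - R0 * αχ - R1 * αχ| = |R1 * αχ + R0 * αχ - 1| := by
      rw [show (1 - R0 * αχ - R1 * αχ) = -(R1 * αχ + R0 * αχ - 1) from by ring, abs_neg]
    have hsub : (gmean (grp s 0) h' - gmean (grp s 1) h') i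
        = gmean (grp s 0) h' i - gmean (grp s 1) h' i := rfl
    have hsubc : (gmean (grp s 0) c - gmean (grp s 1) c) i = c0 - c1 := rfl
    rw [hsub, hsubc]
    have htri : |gmean (grp s 0) h' i - gmean (grp s 1) h' i|
        ≤ |gmean (grp s 0) h' i - σ zb0| + |σ zb0 - σ zb1| + |σ zb1 - gmean (grp s 1) h' i| := by
      have := abs_sub_le (gmean (grp s 0) h' i) (σ zb0) (gmean (grp s 1) h' i)
      have := abs_sub_le (σ zb0) (σ zb1) (gmean (grp s 1) h' i)
      linarith [abs_sub_le (gmean (grp s 0) h' i) (σ zb0) (gmean (grp s 1) h' i),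
        abs_sub_le (σ zb0) (σ zb1) (gmean (grp s 1) h' i)]
    have hq2 : L * |zb0 - zb1| ≤ L * (|R1 * αχ + R0 * αχ - 1| * |c0 - c1| + 2 * Δc) := by
      rw [← habs]
      exact mul_le_mul_of_nonneg_left h2 hL
    have hp1' : |σ zb1 - gmean (grp s 1) h' i| = |gmean (grp s 1) h' i - σ zb1| := abs_sub_comm _ _
    rw [hA, hB]
    rw [hp1'] at htri
    nlinarith [q, hq2, p0, p1, htri]
  -- norm bound
  have hA0 : 0 ≤ A := mul_nonneg hL (abs_nonneg _)
  have hB0 : 0 ≤ B := by rw [hB]; nlinarith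
  have hnormle := euclid_norm_le_of_pointwise _ _ A B hA0 hB0 hpt
  -- gmean commutes with W
  have hcg : ∀ t : Fin 2, gmean (grp s t) c = W (gmean (grp s t) h) := by
    intro t
    rw [gmean, gmean, map_smul, map_sum]
    congr 1
    exact Finset.sum_congr rfl fun j _ => hc j
  have hy : ‖gmean (grp s 0) c - gmean (grp s 1) c‖
      ≤ ‖W‖ * ‖gmean (grp s 0) h - gmean (grp s 1) h‖ := by
    rw [hcg 0, hcg 1, ← map_sub]
    exact W.le_opNorm _
  have hfinal : A * ‖gmean (grp s 0) c - gmean (grp s 1) c‖ + Real.sqrt F' * B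
      ≤ A * (‖W‖ * ‖gmean (grp s 0) h - gmean (grp s 1) h‖) + Real.sqrt F' * B := by
    have := mul_le_mul_of_nonneg_left hy hA0
    linarith
  refine hnormle.trans (hfinal.trans (le_of_eq ?_))
  rw [hA, hB, hR0, hR1]
  ring
end

section
/- Let V be a finite set of nodes partitioned by a binary sensitive attribute s : V → {0,1} into nonempty groups S₀ and S₁. Let W ∈ ℝ^{F'×F}, let h_j ∈ ℝ^F be input representations, z_j = W h_j ∈ ℝ^{F'}, and h'_j = σ(z_j) with σ : ℝ → ℝ an L-Lipschitz activation applied entrywise. Assume ‖z_j − z̄_{s(j)}‖_∞ ≤ Δz for every j ∈ V, where z̄_s is the group mean of the z_j over S_s. Then ‖h̄'₀ − h̄'₁‖₂ ≤ L ( σmax(W) · ‖h̄₀ − h̄₁‖₂ + 2√(F') Δz ). -/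
open Finset

lemma mean_close {V : Type*} (S : Finset V) (hS : S.Nonempty) (f : V → ℝ) (c B : ℝ)
    (hb : ∀ j ∈ S, |f j - c| ≤ B) :
    |(S.card : ℝ)⁻¹ * ∑ j ∈ S, f j - c| ≤ B := by
  have hcard : (0:ℝ) < S.card := by exact_mod_cast hS.card_pos
  have : (S.card : ℝ)⁻¹ * ∑ j ∈ S, f j - c
      = (S.card : ℝ)⁻¹ * ∑ j ∈ S, (f j - c) := by
    rw [Finset.sum_sub_distrib, Finset.sum_const, nsmul_eq_mul]
    field_simp
  rw [this, abs_mul, abs_inv, abs_of_pos hcard]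
  have h1 : |∑ j ∈ S, (f j - c)| ≤ ∑ j ∈ S, B := by
    refine (Finset.abs_sum_le_sum_abs _ _).trans (Finset.sum_le_sum hb)
  rw [Finset.sum_const, nsmul_eq_mul] at h1
  calc (S.card : ℝ)⁻¹ * |∑ j ∈ S, (f j - c)| ≤ (S.card : ℝ)⁻¹ * (S.card * B) := by
        exact mul_le_mul_of_nonneg_left h1 (by positivity)
    _ = B := by field_simp

/-- Lemma 1: the disparity between the mean representations of the two sensitive groups
output by a fully connected layer `h' = σ(W h)` is bounded by
`L (σmax(W) ‖h̄₀ - h̄₁‖₂ + 2 √F' Δz)`. Here the linear map `W` between Euclidean spaces plays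
the role of the weight matrix, and `‖W‖` is its ℓ₂ operator norm, i.e. its largest singular
value. -/
theorem fc_layer_disparity_bound
    {V : Type*} [Fintype V] {F F' : ℕ}
    (s : V → Fin 2)
    (hS₀ : (grp s 0).Nonempty) (hS₁ : (grp s 1).Nonempty)
    (W : EuclideanSpace ℝ (Fin F) →L[ℝ] EuclideanSpace ℝ (Fin F'))
    (h : V → EuclideanSpace ℝ (Fin F))
    (z : V → EuclideanSpace ℝ (Fin F')) (hz : ∀ j, z j = W (h j))
    (σ : ℝ → ℝ) (L : ℝ) (hσ : ∀ a b, |σ a - σ b| ≤ L * |a - b|)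
    (h' : V → EuclideanSpace ℝ (Fin F')) (hh' : ∀ j i, h' j i = σ (z j i))
    (Δz : ℝ)
    (hΔz : ∀ j, ∀ i, |z j i - gmean (grp s (s j)) z i| ≤ Δz) :
    ‖gmean (grp s 0) h' - gmean (grp s 1) h'‖ ≤
      L * (‖W‖ * ‖gmean (grp s 0) h - gmean (grp s 1) h‖ + 2 * Real.sqrt F' * Δz) := by
  have hL : 0 ≤ L := by
    have h1 := hσ 0 1
    have h2 := abs_nonneg (σ 0 - σ 1)
    simp at h1
    linarith
  rcases Nat.eq_zero_or_pos F' with hF | hF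
  · subst hF
    have hD : gmean (grp s 0) h' - gmean (grp s 1) h' = 0 := Subsingleton.elim _ _
    rw [hD, norm_zero]
    simp only [Nat.cast_zero, Real.sqrt_zero, mul_zero, zero_mul, add_zero]
    positivity
  · have hΔ : 0 ≤ Δz := by
      obtain ⟨j₀, hj₀⟩ := hS₀
      exact (abs_nonneg _).trans (hΔz j₀ ⟨0, hF⟩)
    -- group means of z are images under W of group means of h
    have key : ∀ S : Finset V, gmean S z = W (gmean S h) := by
      intro S
      unfold gmean
      rw [Finset.sum_congr rfl (fun j _ => hz j), ← map_sum, ← map_smul]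
    -- coordinatewise bound
    have coord : ∀ i, |(gmean (grp s 0) h' - gmean (grp s 1) h') i| ≤
        L * |(gmean (grp s 0) z - gmean (grp s 1) z) i| + 2 * (L * Δz) := by
      intro i
      have bnd : ∀ t : Fin 2, (grp s t).Nonempty →
          |gmean (grp s t) h' i - σ (gmean (grp s t) z i)| ≤ L * Δz := by
        intro t ht
        rw [gmean_apply]
        apply mean_close _ ht
        intro j hj
        have hsj : s j = t := (Finset.mem_filter.mp hj).2
        rw [hh']
        calc |σ (z j i) - σ (gmean (grp s t) z i)|
            ≤ L * |z j i - gmean (grp s t) z i| := hσ _ _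
          _ ≤ L * Δz := mul_le_mul_of_nonneg_left (by simpa [hsj] using hΔz j i) hL
      have b0 := bnd 0 hS₀
      have b1 := bnd 1 hS₁
      have mid : |σ (gmean (grp s 0) z i) - σ (gmean (grp s 1) z i)| ≤
          L * |gmean (grp s 0) z i - gmean (grp s 1) z i| := hσ _ _
      have e1 : (gmean (grp s 0) h' - gmean (grp s 1) h') i
          = gmean (grp s 0) h' i - gmean (grp s 1) h' i := rfl
      have e2 : (gmean (grp s 0) z - gmean (grp s 1) z) i
          = gmean (grp s 0) z i - gmean (grp s 1) z i := rfl
      rw [e1, e2]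
      have t0 := abs_sub_abs_le_abs_sub (gmean (grp s 0) h' i - gmean (grp s 1) h' i) 0
      have := abs_sub (gmean (grp s 0) h' i) (gmean (grp s 1) h' i)
      -- triangle: |A - D| ≤ |A - B| + |B - C| + |C - D|
      have tri : |gmean (grp s 0) h' i - gmean (grp s 1) h' i|
          ≤ |gmean (grp s 0) h' i - σ (gmean (grp s 0) z i)|
            + |σ (gmean (grp s 0) z i) - σ (gmean (grp s 1) z i)|
            + |σ (gmean (grp s 1) z i) - gmean (grp s 1) h' i| := by
        calc |gmean (grp s 0) h' i - gmean (grp s 1) h' i|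
            ≤ |gmean (grp s 0) h' i - σ (gmean (grp s 1) z i)|
              + |σ (gmean (grp s 1) z i) - gmean (grp s 1) h' i| := abs_sub_le _ _ _
          _ ≤ (|gmean (grp s 0) h' i - σ (gmean (grp s 0) z i)|
              + |σ (gmean (grp s 0) z i) - σ (gmean (grp s 1) z i)|)
              + |σ (gmean (grp s 1) z i) - gmean (grp s 1) h' i| := by
                gcongr; exact abs_sub_le _ _ _
      rw [abs_sub_comm (σ (gmean (grp s 1) z i))] at tri
      linarith
    -- norm bound via coordinates
    set D := gmean (grp s 0) h' - gmean (grp s 1) h' with hD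
    set E := gmean (grp s 0) z - gmean (grp s 1) z with hE
    let u : EuclideanSpace ℝ (Fin F') := WithLp.toLp 2 (fun i => L * |E i|)
    let w : EuclideanSpace ℝ (Fin F') := WithLp.toLp 2 (fun i => 2 * (L * Δz))
    have h1 : ‖D‖ ≤ ‖u + w‖ := by
      rw [EuclideanSpace.norm_eq, EuclideanSpace.norm_eq]
      apply Real.sqrt_le_sqrt
      apply Finset.sum_le_sum
      intro i _
      have h2 : ‖D i‖ ≤ ‖(u + w) i‖ := by
        have hc := coord i
        have huw : (u + w) i = L * |E i| + 2 * (L * Δz) := rfl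
        rw [Real.norm_eq_abs, Real.norm_eq_abs, huw,
          abs_of_nonneg (by positivity : (0:ℝ) ≤ L * |E i| + 2 * (L * Δz))]
        exact hc
      exact pow_le_pow_left₀ (norm_nonneg _) h2 2
    have h2 : ‖u‖ = L * ‖E‖ := by
      rw [EuclideanSpace.norm_eq, EuclideanSpace.norm_eq]
      have : ∀ i, ‖u i‖ ^ 2 = L ^ 2 * ‖E i‖ ^ 2 := by
        intro i
        show ‖L * |E i|‖ ^ 2 = _
        rw [Real.norm_eq_abs, Real.norm_eq_abs, abs_mul, abs_abs, abs_of_nonneg hL]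
        ring
      rw [Finset.sum_congr rfl (fun i _ => this i), ← Finset.mul_sum,
        Real.sqrt_mul (sq_nonneg L), Real.sqrt_sq hL]
    have h3 : ‖w‖ = 2 * (L * Δz) * Real.sqrt F' := by
      rw [EuclideanSpace.norm_eq]
      have : ∀ i : Fin F', ‖w i‖ ^ 2 = (2 * (L * Δz)) ^ 2 := by
        intro i
        show ‖2 * (L * Δz)‖ ^ 2 = _
        rw [Real.norm_eq_abs, sq_abs]
      rw [Finset.sum_congr rfl (fun i _ => this i), Finset.sum_const,
        Finset.card_univ, Fintype.card_fin, nsmul_eq_mul,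
        Real.sqrt_mul (Nat.cast_nonneg F'), Real.sqrt_sq (by positivity), mul_comm]
    have hnorm : ‖D‖ ≤ L * ‖E‖ + 2 * (L * Δz) * Real.sqrt F' := by
      calc ‖D‖ ≤ ‖u‖ + ‖w‖ := h1.trans (norm_add_le u w)
        _ = L * ‖E‖ + 2 * (L * Δz) * Real.sqrt F' := by rw [h2, h3]
    have hE2 : ‖E‖ ≤ ‖W‖ * ‖gmean (grp s 0) h - gmean (grp s 1) h‖ := by
      rw [hE, key, key, ← map_sub]
      exact W.le_opNorm _
    have hs : 0 ≤ Real.sqrt F' := Real.sqrt_nonneg _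
    calc ‖D‖ ≤ L * ‖E‖ + 2 * (L * Δz) * Real.sqrt F' := hnorm
      _ ≤ L * (‖W‖ * ‖gmean (grp s 0) h - gmean (grp s 1) h‖) + 2 * (L * Δz) * Real.sqrt F' := by
          gcongr
      _ = L * (‖W‖ * ‖gmean (grp s 0) h - gmean (grp s 1) h‖ + 2 * Real.sqrt F' * Δz) := by
          ring
end

section
/- Let S₀ and S₁ be nonempty finite disjoint index sets, let z_j ∈ ℝ^F for j ∈ S₀ ∪ S₁, and let h_j = σ(z_j) where σ : ℝ → ℝ is an L-Lipschitz activation applied entrywise. Suppose ‖z_j − z̄_s‖_∞ ≤ Δ for every j ∈ S_s, s = 0,1, where z̄_s is the group mean of the z_j over S_s. Then the group means h̄_s of the h_j satisfy ‖h̄₀ − h̄₁‖₂ ≤ L ( ‖z̄₀ − z̄₁‖₂ + 2√F Δ ). -/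
open Finset

lemma norm_le_of_abs_le' {F : ℕ} (v : EuclideanSpace ℝ (Fin F)) (C : ℝ) (hC : 0 ≤ C)
    (hv : ∀ i, |v i| ≤ C) : ‖v‖ ≤ Real.sqrt F * C := by
  rw [EuclideanSpace.norm_eq]
  have hsum : (∑ i, ‖v i‖ ^ 2) ≤ ∑ _i : Fin F, C ^ 2 := by
    apply Finset.sum_le_sum
    intro i _
    rw [Real.norm_eq_abs]
    exact pow_le_pow_left₀ (abs_nonneg _) (hv i) 2
  calc Real.sqrt (∑ i, ‖v i‖ ^ 2) ≤ Real.sqrt (∑ _i : Fin F, C ^ 2) :=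
        Real.sqrt_le_sqrt hsum
    _ = Real.sqrt ((F : ℝ) * C ^ 2) := by simp [mul_comm]
    _ = Real.sqrt F * C := by
        rw [Real.sqrt_mul (Nat.cast_nonneg F), Real.sqrt_sq hC]

lemma norm_le_norm_of_abs_le' {F : ℕ} (v w : EuclideanSpace ℝ (Fin F))
    (hvw : ∀ i, |v i| ≤ |w i|) : ‖v‖ ≤ ‖w‖ := by
  rw [EuclideanSpace.norm_eq, EuclideanSpace.norm_eq]
  apply Real.sqrt_le_sqrt
  apply Finset.sum_le_sum
  intro i _
  rw [Real.norm_eq_abs, Real.norm_eq_abs]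
  exact pow_le_pow_left₀ (abs_nonneg _) (hvw i) 2

/-- Lemma 2 (appendix): the disparity between the group means of entrywise-activated
representations is controlled by the disparity of the pre-activation group means plus a
deviation term. -/
theorem activated_mean_disparity_bound
    {ι : Type*} {F : ℕ} (S₀ S₁ : Finset ι)
    (hS₀ : S₀.Nonempty) (hS₁ : S₁.Nonempty) (hdisj : Disjoint S₀ S₁)
    (z : ι → EuclideanSpace ℝ (Fin F))
    (σ : ℝ → ℝ) (L : ℝ) (hσ : ∀ a b, |σ a - σ b| ≤ L * |a - b|)
    (h : ι → EuclideanSpace ℝ (Fin F)) (hh : ∀ j i, h j i = σ (z j i))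
    (Δ : ℝ)
    (hdev₀ : ∀ j ∈ S₀, ∀ i, |z j i - gmean S₀ z i| ≤ Δ)
    (hdev₁ : ∀ j ∈ S₁, ∀ i, |z j i - gmean S₁ z i| ≤ Δ) :
    ‖gmean S₀ h - gmean S₁ h‖ ≤
      L * (‖gmean S₀ z - gmean S₁ z‖ + 2 * Real.sqrt F * Δ) := by
  have hL : 0 ≤ L := by
    have h1 := hσ 0 1
    have h2 := abs_nonneg (σ 0 - σ 1)
    simp at h1
    linarith
  rcases Nat.eq_zero_or_pos F with hF | hF
  · subst hF
    have e1 : ‖gmean S₀ h - gmean S₁ h‖ = 0 := by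
      rw [EuclideanSpace.norm_eq]; simp
    have e2 : ‖gmean S₀ z - gmean S₁ z‖ = 0 := by
      rw [EuclideanSpace.norm_eq]; simp
    rw [e1, e2]
    simp
  have hΔ : 0 ≤ Δ := by
    obtain ⟨j, hj⟩ := hS₀
    exact le_trans (abs_nonneg _) (hdev₀ j hj ⟨0, hF⟩)
  -- key per-group bound
  have key : ∀ (S : Finset ι), S.Nonempty →
      (∀ j ∈ S, ∀ i, |z j i - gmean S z i| ≤ Δ) →
      ∀ i, |gmean S h i - σ (gmean S z i)| ≤ L * Δ := by
    intro S hS hdev i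
    have hcard : (S.card : ℝ) ≠ 0 := by
      exact_mod_cast Finset.card_ne_zero.mpr hS
    have hcardpos : (0 : ℝ) < S.card := by
      positivity
    have e : gmean S h i - σ (gmean S z i)
        = (S.card : ℝ)⁻¹ * ∑ j ∈ S, (σ (z j i) - σ (gmean S z i)) := by
      rw [gmean_apply, Finset.sum_sub_distrib, Finset.sum_const, mul_sub]
      have : ∑ j ∈ S, h j i = ∑ j ∈ S, σ (z j i) :=
        Finset.sum_congr rfl fun j _ => hh j i
      rw [this]
      field_simp
      rw [nsmul_eq_mul]
    rw [e, abs_mul, abs_inv, abs_of_pos hcardpos]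
    have hsum : |∑ j ∈ S, (σ (z j i) - σ (gmean S z i))| ≤ S.card * (L * Δ) := by
      calc |∑ j ∈ S, (σ (z j i) - σ (gmean S z i))|
          ≤ ∑ j ∈ S, |σ (z j i) - σ (gmean S z i)| := Finset.abs_sum_le_sum_abs _ _
        _ ≤ ∑ _j ∈ S, L * Δ := by
            apply Finset.sum_le_sum
            intro j hj
            exact le_trans (hσ _ _) (mul_le_mul_of_nonneg_left (hdev j hj i) hL)
        _ = S.card * (L * Δ) := by rw [Finset.sum_const, nsmul_eq_mul]
    calc (S.card : ℝ)⁻¹ * |∑ j ∈ S, (σ (z j i) - σ (gmean S z i))|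
        ≤ (S.card : ℝ)⁻¹ * (S.card * (L * Δ)) :=
          mul_le_mul_of_nonneg_left hsum (by positivity)
      _ = L * Δ := by field_simp
  set u₀ : EuclideanSpace ℝ (Fin F) := WithLp.toLp 2 (fun i => σ (gmean S₀ z i)) with hu₀
  set u₁ : EuclideanSpace ℝ (Fin F) := WithLp.toLp 2 (fun i => σ (gmean S₁ z i)) with hu₁
  have b₀ : ‖gmean S₀ h - u₀‖ ≤ Real.sqrt F * (L * Δ) := by
    apply norm_le_of_abs_le' _ _ (by positivity)
    intro i
    exact key S₀ hS₀ hdev₀ i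
  have b₁ : ‖u₁ - gmean S₁ h‖ ≤ Real.sqrt F * (L * Δ) := by
    apply norm_le_of_abs_le' _ _ (by positivity)
    intro i
    have e : (u₁ - gmean S₁ h) i = -(gmean S₁ h i - u₁ i) := by
      show u₁ i - gmean S₁ h i = _; ring
    rw [e, abs_neg]
    exact key S₁ hS₁ hdev₁ i
  have bmid : ‖u₀ - u₁‖ ≤ L * ‖gmean S₀ z - gmean S₁ z‖ := by
    have := norm_le_norm_of_abs_le' (u₀ - u₁) (L • (gmean S₀ z - gmean S₁ z)) ?_
    · calc ‖u₀ - u₁‖ ≤ ‖L • (gmean S₀ z - gmean S₁ z)‖ := this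
        _ = L * ‖gmean S₀ z - gmean S₁ z‖ := by
            rw [norm_smul, Real.norm_eq_abs, abs_of_nonneg hL]
    · intro i
      have e1 : (u₀ - u₁) i = σ (gmean S₀ z i) - σ (gmean S₁ z i) := rfl
      have e2 : (L • (gmean S₀ z - gmean S₁ z)) i
          = L * (gmean S₀ z i - gmean S₁ z i) := rfl
      rw [e1, e2, abs_mul, abs_of_nonneg hL]
      exact hσ _ _
  calc ‖gmean S₀ h - gmean S₁ h‖
      ≤ ‖gmean S₀ h - u₀‖ + ‖u₀ - u₁‖ + ‖u₁ - gmean S₁ h‖ := by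
        have := norm_sub_le_norm_sub_add_norm_sub (gmean S₀ h) u₀ (gmean S₁ h)
        have t2 := norm_sub_le_norm_sub_add_norm_sub u₀ u₁ (gmean S₁ h)
        linarith
    _ ≤ Real.sqrt F * (L * Δ) + L * ‖gmean S₀ z - gmean S₁ z‖
        + Real.sqrt F * (L * Δ) := by linarith
    _ = L * (‖gmean S₀ z - gmean S₁ z‖ + 2 * Real.sqrt F * Δ) := by ring
end

section
/- Let V be a finite set of nodes partitioned by a binary sensitive attribute s : V → {0,1} into nonempty groups S₀ and S₁. Let each node k ∈ V have a nonempty neighborhood N(k) ⊆ V and attention coefficients α_{kj} ≥ 0 for j ∈ N(k) satisfying Σ_{j∈N(k)} α_{kj} = 1. Let c_j ∈ ℝ^{F'} with group means c̄₀, c̄₁, and let z_k = Σ_{j∈N(k)} α_{kj} c_j. Let S^χ be the set of nodes having at least one neighbor of the opposite sensitive group, S₁^χ = S₁ ∩ S^χ, and R₁^χ = |S₁^χ|/|S₁|. Assume ‖c_j − c̄_{s(j)}‖_∞ ≤ Δc for every j ∈ V, and assume there exists α^χ ∈ [0,1] such that for every node k ∈ S^χ, Σ_{j∈N(k), s(j)≠s(k)}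 α_{kj} = α^χ. Then ‖ (1/|S₁|) Σ_{j∈S₁} z_j − [ R₁^χ ( α^χ c̄₀ + (1−α^χ) c̄₁ ) + (1−R₁^χ) c̄₁ ] ‖_∞ ≤ Δc. -/
open Finset

private lemma euclid_sum_apply {V : Type*} {d : ℕ} (S : Finset V)
    (f : V → EuclideanSpace ℝ (Fin d)) (i : Fin d) :
    (∑ j ∈ S, f j) i = ∑ j ∈ S, f j i := by
  classical
  induction S using Finset.induction_on with
  | empty => rfl
  | insert x S h ih => rw [Finset.sum_insert h, Finset.sum_insert h, PiLp.add_apply, ih]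

/-- Equation (22) in the appendix: the group mean over `S₁` of the attention-aggregated
representations lies within an `∞`-norm band of width `Δc` around the convex combination
`R₁^χ (α^χ c̄₀ + (1 - α^χ) c̄₁) + (1 - R₁^χ) c̄₁` of the group means of the `c_j`. -/
theorem aggregated_group_mean_band
    {V : Type*} [Fintype V] [DecidableEq V] {F' : ℕ}
    (s : V → Fin 2)
    (hS₀ : (grp s 0).Nonempty) (hS₁ : (grp s 1).Nonempty)
    (N : V → Finset V) (hN : ∀ k, (N k).Nonempty)
    (α : V → V → ℝ) (hαnn : ∀ k, ∀ j ∈ N k, 0 ≤ α k j)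
    (hαsum : ∀ k, ∑ j ∈ N k, α k j = 1)
    (c : V → EuclideanSpace ℝ (Fin F'))
    (z : V → EuclideanSpace ℝ (Fin F')) (hz : ∀ k, z k = ∑ j ∈ N k, α k j • c j)
    (Δc : ℝ)
    (hΔc : ∀ j, ∀ i, |c j i - gmean (grp s (s j)) c i| ≤ Δc)
    (Sχ : Finset V) (hSχ : ∀ k, k ∈ Sχ ↔ ∃ j ∈ N k, s j ≠ s k)
    (αχ : ℝ) (hαχ0 : 0 ≤ αχ) (hαχ1 : αχ ≤ 1)
    (hA2 : ∀ k ∈ Sχ, ∑ j ∈ (N k).filter (fun j => s j ≠ s k), α k j = αχ) :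
    ∀ i, |gmean (grp s 1) z i
        - ((((grp s 1 ∩ Sχ).card : ℝ) / ((grp s 1).card : ℝ)) •
              (αχ • gmean (grp s 0) c + (1 - αχ) • gmean (grp s 1) c)
            + (1 - ((grp s 1 ∩ Sχ).card : ℝ) / ((grp s 1).card : ℝ)) •
              gmean (grp s 1) c) i| ≤ Δc := by
  intro i
  classical
  obtain ⟨j₀, hj₀⟩ := hS₁
  have hΔ0 : 0 ≤ Δc := le_trans (abs_nonneg _) (hΔc j₀ i)
  set m : Fin 2 → ℝ := fun t => gmean (grp s t) c i with hm
  have two : ∀ a : Fin 2, a ≠ 1 → a = 0 := by decide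
  set W : V → ℝ := fun k => if k ∈ Sχ then αχ * m 0 + (1 - αχ) * m 1 else m 1 with hW
  have key : ∀ k ∈ grp s 1, |z k i - W k| ≤ Δc := by
    intro k hk
    have hsk : s k = 1 := by simpa [grp] using hk
    have hzi : z k i = ∑ j ∈ N k, α k j * c j i := by
      rw [hz k, euclid_sum_apply]
      simp [PiLp.smul_apply, smul_eq_mul]
    have hw : W k = ∑ j ∈ N k, α k j * m (s j) := by
      rw [← Finset.sum_filter_add_sum_filter_not (N k) (fun j => s j ≠ s k)]
      have h1 : ∑ j ∈ (N k).filter (fun j => s j ≠ s k), α k j * m (s j)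
          = (∑ j ∈ (N k).filter (fun j => s j ≠ s k), α k j) * m 0 := by
        rw [Finset.sum_mul]
        refine Finset.sum_congr rfl fun j hj => ?_
        have hsj : s j = 0 := two _ (by
          have := (Finset.mem_filter.mp hj).2
          rw [hsk] at this; exact this)
        rw [hsj]
      have h2 : ∑ j ∈ (N k).filter (fun j => ¬ s j ≠ s k), α k j * m (s j)
          = (∑ j ∈ (N k).filter (fun j => ¬ s j ≠ s k), α k j) * m 1 := by
        rw [Finset.sum_mul]
        refine Finset.sum_congr rfl fun j hj => ?_
        have hsj : s j = 1 := by
          have := (Finset.mem_filter.mp hj).2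
          simp only [ne_eq, not_not] at this
          rw [this, hsk]
        rw [hsj]
      rw [h1, h2]
      have hsplit : (∑ j ∈ (N k).filter (fun j => s j ≠ s k), α k j)
          + (∑ j ∈ (N k).filter (fun j => ¬ s j ≠ s k), α k j) = 1 := by
        rw [Finset.sum_filter_add_sum_filter_not]; exact hαsum k
      by_cases hkχ : k ∈ Sχ
      · have hα := hA2 k hkχ
        have hα' : (∑ j ∈ (N k).filter (fun j => ¬ s j ≠ s k), α k j) = 1 - αχ := by
          rw [hα] at hsplit; linarith
        rw [hW]
        simp only [if_pos hkχ]
        rw [hα, hα']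
      · have hnone : (N k).filter (fun j => s j ≠ s k) = ∅ := by
          rw [Finset.filter_eq_empty_iff]
          intro j hj hcon
          exact hkχ ((hSχ k).mpr ⟨j, hj, hcon⟩)
        rw [hnone] at hsplit ⊢
        simp only [Finset.sum_empty, zero_add] at hsplit ⊢
        rw [hW]
        simp only [if_neg hkχ, hsplit, zero_mul, one_mul, zero_add]
    rw [hzi, hw, ← Finset.sum_sub_distrib]
    have heq : ∀ j ∈ N k, α k j * c j i - α k j * m (s j) = α k j * (c j i - m (s j)) := by
      intro j _; ring
    rw [Finset.sum_congr rfl heq]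
    calc |∑ j ∈ N k, α k j * (c j i - m (s j))|
        ≤ ∑ j ∈ N k, |α k j * (c j i - m (s j))| := Finset.abs_sum_le_sum_abs _ _
      _ ≤ ∑ j ∈ N k, α k j * Δc := by
          refine Finset.sum_le_sum fun j hj => ?_
          rw [abs_mul, abs_of_nonneg (hαnn k j hj)]
          exact mul_le_mul_of_nonneg_left (hΔc j i) (hαnn k j hj)
      _ = Δc := by rw [← Finset.sum_mul, hαsum, one_mul]
  set n : ℝ := ((grp s 1).card : ℝ) with hn
  set a : ℝ := (((grp s 1) ∩ Sχ).card : ℝ) with ha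
  have hnpos : (0:ℝ) < n := by
    rw [hn]
    exact_mod_cast Finset.card_pos.mpr ⟨j₀, hj₀⟩
  have hzmean : gmean (grp s 1) z i = n⁻¹ * ∑ k ∈ grp s 1, z k i := by
    simp [gmean, PiLp.smul_apply, smul_eq_mul, hn, euclid_sum_apply]
  have hWsum : ∑ k ∈ grp s 1, W k
      = a * (αχ * m 0 + (1 - αχ) * m 1) + (n - a) * m 1 := by
    rw [hW]
    rw [Finset.sum_ite]
    simp only [Finset.sum_const, smul_eq_mul]
    have hf1 : (grp s 1).filter (fun k => k ∈ Sχ) = grp s 1 ∩ Sχ := by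
      ext k; simp [Finset.mem_inter, Finset.mem_filter]
    have hf2 : ((grp s 1).filter (fun k => k ∉ Sχ)).card
        = (grp s 1).card - (grp s 1 ∩ Sχ).card := by
      rw [Finset.filter_not, Finset.card_sdiff_of_subset (Finset.filter_subset _ _), hf1]
    have hle : (grp s 1 ∩ Sχ).card ≤ (grp s 1).card :=
      Finset.card_le_card Finset.inter_subset_left
    rw [hf1, hf2]
    simp only [nsmul_eq_mul, Nat.cast_sub hle]
    rw [← ha, ← hn]
  have hexpr : (((a / n) •
        (αχ • gmean (grp s 0) c + (1 - αχ) • gmean (grp s 1) c)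
      + (1 - a / n) • gmean (grp s 1) c) : EuclideanSpace ℝ (Fin F')) i
      = n⁻¹ * ∑ k ∈ grp s 1, W k := by
    rw [hWsum]
    have hm0 : gmean (grp s 0) c i = m 0 := rfl
    have hm1 : gmean (grp s 1) c i = m 1 := rfl
    simp only [PiLp.add_apply, PiLp.smul_apply, smul_eq_mul, hm0, hm1]
    field_simp
  rw [hzmean, hexpr, ← mul_sub, ← Finset.sum_sub_distrib, abs_mul,
    abs_of_nonneg (inv_nonneg.mpr hnpos.le)]
  calc n⁻¹ * |∑ k ∈ grp s 1, (z k i - W k)|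
      ≤ n⁻¹ * ∑ k ∈ grp s 1, |z k i - W k| :=
        mul_le_mul_of_nonneg_left (Finset.abs_sum_le_sum_abs _ _) (inv_nonneg.mpr hnpos.le)
    _ ≤ n⁻¹ * ∑ _k ∈ grp s 1, Δc :=
        mul_le_mul_of_nonneg_left (Finset.sum_le_sum key) (inv_nonneg.mpr hnpos.le)
    _ = Δc := by
        rw [Finset.sum_const, nsmul_eq_mul, ← hn, ← mul_assoc,
          inv_mul_cancel₀ hnpos.ne', one_mul]
end

section
/- Let V be a finite set of nodes partitioned by a binary sensitive attribute s : V → {0,1} into nonempty groups S₀ and S₁. Let each node k ∈ V have a nonempty neighborhood N(k) ⊆ V and attention coefficients α_{kj} ≥ 0 for j ∈ N(k) satisfying Σ_{j∈N(k)} α_{kj} = 1. Let c_j ∈ ℝ^{F'} with group means c̄₀, c̄₁, and let z_k = Σ_{j∈N(k)} α_{kj} c_j. Let S^χ be the set of nodes having at least one neighbor of the opposite sensitive group, S_s^χ = S_s ∩ S^χ, and R_s^χ = |S_s^χ|/|S_s| for s = 0,1. Assume ‖c_j − c̄_{s(j)}‖_∞ ≤ Δc for every j ∈ V, and assume there exists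 α^χ ∈ [0,1] such that for every node k ∈ S^χ, Σ_{j∈N(k), s(j)≠s(k)} α_{kj} = α^χ. Then ‖ (1/|S₁|) Σ_{j∈S₁} z_j − (1/|S₀|) Σ_{j∈S₀} z_j ‖₂ ≤ |(R₁^χ + R₀^χ) α^χ − 1| · ‖c̄₀ − c̄₁‖₂ + 2√(F') Δc. -/
open Finset

lemma coord_norm_bound {F' : ℕ} (v : EuclideanSpace ℝ (Fin F')) (M : ℝ)
    (h : ∀ i, |v i| ≤ M) : ‖v‖ ≤ Real.sqrt F' * M := by
  rcases Nat.eq_zero_or_pos F' with h0 | hpos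
  · subst h0
    simp [EuclideanSpace.norm_eq]
  have hM : 0 ≤ M := le_trans (abs_nonneg _) (h ⟨0, hpos⟩)
  rw [EuclideanSpace.norm_eq]
  have hs : ∑ i, ‖v i‖ ^ 2 ≤ (F' : ℝ) * M ^ 2 := by
    calc ∑ i, ‖v i‖ ^ 2 ≤ ∑ _i : Fin F', M ^ 2 := by
          apply Finset.sum_le_sum; intro i _
          have hi := h i
          rw [Real.norm_eq_abs]
          nlinarith [abs_nonneg (v i)]
    _ = (F' : ℝ) * M ^ 2 := by simp [mul_comm]
  calc Real.sqrt (∑ i, ‖v i‖ ^ 2) ≤ Real.sqrt ((F' : ℝ) * M ^ 2) := Real.sqrt_le_sqrt hs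
  _ = Real.sqrt F' * M := by rw [Real.sqrt_mul (by positivity), Real.sqrt_sq hM]

/-- Equation (29) in the appendix proof of Theorem 1: the disparity between the group means of
the attention-aggregated representations is bounded by
`|(R₁^χ + R₀^χ) α^χ - 1| ‖c̄₀ - c̄₁‖₂ + 2 √F' Δc`. -/
theorem aggregated_mean_disparity_bound
    {V : Type*} [Fintype V] [DecidableEq V] {F' : ℕ}
    (s : V → Fin 2)
    (hS₀ : (grp s 0).Nonempty) (hS₁ : (grp s 1).Nonempty)
    (N : V → Finset V) (hN : ∀ k, (N k).Nonempty)
    (α : V → V → ℝ) (hαnn : ∀ k, ∀ j ∈ N k, 0 ≤ α k j)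
    (hαsum : ∀ k, ∑ j ∈ N k, α k j = 1)
    (c : V → EuclideanSpace ℝ (Fin F'))
    (z : V → EuclideanSpace ℝ (Fin F')) (hz : ∀ k, z k = ∑ j ∈ N k, α k j • c j)
    (Δc : ℝ)
    (hΔc : ∀ j, ∀ i, |c j i - gmean (grp s (s j)) c i| ≤ Δc)
    (Sχ : Finset V) (hSχ : ∀ k, k ∈ Sχ ↔ ∃ j ∈ N k, s j ≠ s k)
    (αχ : ℝ) (hαχ0 : 0 ≤ αχ) (hαχ1 : αχ ≤ 1)
    (hA2 : ∀ k ∈ Sχ, ∑ j ∈ (N k).filter (fun j => s j ≠ s k), α k j = αχ) :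
    ‖gmean (grp s 1) z - gmean (grp s 0) z‖ ≤
      |(((grp s 1 ∩ Sχ).card : ℝ) / ((grp s 1).card : ℝ)
          + ((grp s 0 ∩ Sχ).card : ℝ) / ((grp s 0).card : ℝ)) * αχ - 1|
        * ‖gmean (grp s 0) c - gmean (grp s 1) c‖ + 2 * Real.sqrt F' * Δc := by
  classical
  set m : Fin 2 → EuclideanSpace ℝ (Fin F') := fun t => gmean (grp s t) c with hm
  set e : V → EuclideanSpace ℝ (Fin F') := fun j => c j - m (s j) with he
  set β : V → ℝ := fun k => if k ∈ Sχ then αχ else 0 with hβ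
  set ε : V → EuclideanSpace ℝ (Fin F') := fun k => ∑ j ∈ N k, α k j • e j with hε
  have hother : ∀ a b : Fin 2, a ≠ b → a = 1 - b := by decide
  -- pointwise decomposition
  have hpoint : ∀ k, z k = (1 - β k) • m (s k) + β k • m (1 - s k) + ε k := by
    intro k
    have hβk : ∑ j ∈ (N k).filter (fun j => ¬ s j = s k), α k j = β k := by
      by_cases hk : k ∈ Sχ
      · simpa [hβ, hk] using hA2 k hk
      · have hempty : (N k).filter (fun j => ¬ s j = s k) = ∅ := by
          apply Finset.filter_eq_empty_iff.mpr
          intro j hj hne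
          exact hk ((hSχ k).mpr ⟨j, hj, hne⟩)
        simp [hempty, hβ, hk]
    have hβk' : ∑ j ∈ (N k).filter (fun j => s j = s k), α k j = 1 - β k := by
      have := Finset.sum_filter_add_sum_filter_not (N k) (fun j => s j = s k) (fun j => α k j)
      rw [hβk, hαsum k] at this
      linarith
    calc z k = ∑ j ∈ N k, α k j • (m (s j) + e j) := by
          rw [hz k]; apply Finset.sum_congr rfl; intro j _
          congr 1
          simp [he]
    _ = ∑ j ∈ N k, α k j • m (s j) + ε k := by
          rw [hε]; rw [← Finset.sum_add_distrib]
          apply Finset.sum_congr rfl; intro j _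
          rw [smul_add]
    _ = (1 - β k) • m (s k) + β k • m (1 - s k) + ε k := by
          congr 1
          rw [← Finset.sum_filter_add_sum_filter_not (N k) (fun j => s j = s k)]
          congr 1
          · rw [← hβk', Finset.sum_smul]
            apply Finset.sum_congr rfl; intro j hj
            rw [(Finset.mem_filter.mp hj).2]
          · rw [← hβk, Finset.sum_smul]
            apply Finset.sum_congr rfl; intro j hj
            rw [hother _ _ (Finset.mem_filter.mp hj).2]
  -- group-level decomposition
  have hgrp : ∀ t : Fin 2, (grp s t).Nonempty →
      gmean (grp s t) z
        = (1 - ((grp s t ∩ Sχ).card : ℝ) / ((grp s t).card : ℝ) * αχ) • m t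
          + (((grp s t ∩ Sχ).card : ℝ) / ((grp s t).card : ℝ) * αχ) • m (1 - t)
          + (((grp s t).card : ℝ))⁻¹ • ∑ k ∈ grp s t, ε k := by
    intro t ht
    have hn : (0:ℝ) < ((grp s t).card : ℝ) := by exact_mod_cast ht.card_pos
    have hsk : ∀ k ∈ grp s t, s k = t := by
      intro k hk; simpa [grp] using hk
    have hβsum : ∑ k ∈ grp s t, β k = ((grp s t ∩ Sχ).card : ℝ) * αχ := by
      rw [hβ]
      rw [Finset.sum_ite_mem]
      simp [mul_comm]
    have hzsum : ∑ k ∈ grp s t, z k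
        = (((grp s t).card : ℝ) - ((grp s t ∩ Sχ).card : ℝ) * αχ) • m t
          + (((grp s t ∩ Sχ).card : ℝ) * αχ) • m (1 - t) + ∑ k ∈ grp s t, ε k := by
      calc ∑ k ∈ grp s t, z k
          = ∑ k ∈ grp s t, ((1 - β k) • m t + β k • m (1 - t) + ε k) := by
            apply Finset.sum_congr rfl; intro k hk
            rw [hpoint k, hsk k hk]
      _ = (∑ k ∈ grp s t, (1 - β k)) • m t + (∑ k ∈ grp s t, β k) • m (1 - t)
            + ∑ k ∈ grp s t, ε k := by
            rw [Finset.sum_add_distrib, Finset.sum_add_distrib, Finset.sum_smul,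
              Finset.sum_smul]
      _ = _ := by
            rw [hβsum, Finset.sum_sub_distrib, Finset.sum_const, hβsum]
            simp
    rw [gmean, hzsum]
    rw [smul_add, smul_add, smul_smul, smul_smul]
    congr 2
    · congr 1
      field_simp
    · congr 1
      field_simp
  -- error bounds
  have he_bound : ∀ j, ‖e j‖ ≤ Real.sqrt F' * Δc := by
    intro j
    apply coord_norm_bound
    intro i
    simpa [he, m, gmean] using hΔc j i
  have hεk : ∀ k, ‖ε k‖ ≤ Real.sqrt F' * Δc := by
    intro k
    calc ‖∑ j ∈ N k, α k j • e j‖ ≤ ∑ j ∈ N k, ‖α k j • e j‖ := norm_sum_le _ _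
    _ ≤ ∑ j ∈ N k, α k j * (Real.sqrt F' * Δc) := by
          apply Finset.sum_le_sum; intro j hj
          rw [norm_smul, Real.norm_eq_abs, abs_of_nonneg (hαnn k j hj)]
          exact mul_le_mul_of_nonneg_left (he_bound j) (hαnn k j hj)
    _ = Real.sqrt F' * Δc := by rw [← Finset.sum_mul, hαsum k, one_mul]
  have hEt : ∀ t : Fin 2, (grp s t).Nonempty →
      ‖(((grp s t).card : ℝ))⁻¹ • ∑ k ∈ grp s t, ε k‖ ≤ Real.sqrt F' * Δc := by
    intro t ht
    have hn : (0:ℝ) < ((grp s t).card : ℝ) := by exact_mod_cast ht.card_pos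
    rw [norm_smul, Real.norm_eq_abs, abs_of_nonneg (by positivity)]
    calc ((grp s t).card : ℝ)⁻¹ * ‖∑ k ∈ grp s t, ε k‖
        ≤ ((grp s t).card : ℝ)⁻¹ * (((grp s t).card : ℝ) * (Real.sqrt F' * Δc)) := by
          apply mul_le_mul_of_nonneg_left _ (by positivity)
          calc ‖∑ k ∈ grp s t, ε k‖ ≤ ∑ k ∈ grp s t, ‖ε k‖ := norm_sum_le _ _
          _ ≤ ∑ _k ∈ grp s t, Real.sqrt F' * Δc := Finset.sum_le_sum fun k _ => hεk k
          _ = ((grp s t).card : ℝ) * (Real.sqrt F' * Δc) := by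
                rw [Finset.sum_const, nsmul_eq_mul]
    _ = Real.sqrt F' * Δc := by field_simp
  -- assemble
  set r : Fin 2 → ℝ := fun t => ((grp s t ∩ Sχ).card : ℝ) / ((grp s t).card : ℝ) * αχ with hr
  set E : Fin 2 → EuclideanSpace ℝ (Fin F') :=
    fun t => (((grp s t).card : ℝ))⁻¹ • ∑ k ∈ grp s t, ε k with hE
  have h10 : (1 - (1 : Fin 2)) = 0 := by decide
  have h01 : (1 - (0 : Fin 2)) = 1 := by decide
  have hdiff : gmean (grp s 1) z - gmean (grp s 0) z
      = (r 1 + r 0 - 1) • (m 0 - m 1) + (E 1 - E 0) := by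
    rw [hgrp 1 hS₁, hgrp 0 hS₀, h10, h01]
    show (1 - r 1) • m 1 + r 1 • m 0 + E 1 - ((1 - r 0) • m 0 + r 0 • m 1 + E 0) = _
    module
  rw [hdiff]
  have hK : |(((grp s 1 ∩ Sχ).card : ℝ) / ((grp s 1).card : ℝ)
      + ((grp s 0 ∩ Sχ).card : ℝ) / ((grp s 0).card : ℝ)) * αχ - 1|
      = |r 1 + r 0 - 1| := by
    rw [hr]; ring_nf
  calc ‖(r 1 + r 0 - 1) • (m 0 - m 1) + (E 1 - E 0)‖
      ≤ ‖(r 1 + r 0 - 1) • (m 0 - m 1)‖ + ‖E 1 - E 0‖ := norm_add_le _ _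
  _ ≤ |r 1 + r 0 - 1| * ‖m 0 - m 1‖ + (‖E 1‖ + ‖E 0‖) := by
      rw [norm_smul, Real.norm_eq_abs]
      exact add_le_add (le_refl _) (norm_sub_le _ _)
  _ ≤ |r 1 + r 0 - 1| * ‖m 0 - m 1‖ + (Real.sqrt F' * Δc + Real.sqrt F' * Δc) := by
      exact add_le_add (le_refl _) (add_le_add (hEt 1 hS₁) (hEt 0 hS₀))
  _ = |r 1 + r 0 - 1| * ‖m 0 - m 1‖ + 2 * Real.sqrt F' * Δc := by ring
  _ = _ := by rw [hK]
end

section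
/- Let (Ω, 𝔽, μ) be a probability space with random variables ŷ : Ω → [0,1], ĉ : Ω → {0,1}, and s : Ω → {0,1}. Assume ĉ and s are conditionally independent given ŷ, that μ-almost surely the conditional expectation of the indicator 1_{ĉ=1} given ŷ equals ŷ (i.e., P(ĉ = 1 | ŷ) = ŷ a.s.), and that μ(s = 0) > 0. Then the conditional probability of the event {ĉ = 1} given the event {s = 0} equals the conditional expectation of ŷ given the event {s = 0}: μ(ĉ = 1 | s = 0) = E[ŷ | s = 0]. -/
open MeasureTheory
open scoped ProbabilityTheory

/-- The derivation in Section 4 of the paper: if `chat` (the hard prediction ĉ) and `sens`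
(the sensitive attribute s) are conditionally independent given `yhat` (the soft prediction ŷ,
i.e. the Markov chain s → ŷ → ĉ holds), and `P(ĉ = 1 | ŷ) = ŷ` almost surely, then the
conditional probability `μ(ĉ = 1 | s = 0)` equals the conditional expectation `E[ŷ | s = 0]`.
Here the values `1` and `0` of the binary variables ĉ and s are encoded as `true` and
`false` respectively, conditional probability given the event `{s = 0}` is
`μ({ĉ = 1} ∩ {s = 0}) / μ({s = 0})`, and `E[ŷ | s = 0] = (1/μ({s = 0})) ∫_{s = 0} ŷ dμ`. -/
theorem statistical_parity_special_case
    {Ω : Type*} [MeasurableSpace Ω] [StandardBorelSpace Ω]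
    (μ : Measure Ω) [IsProbabilityMeasure μ]
    (yhat : Ω → ℝ) (chat sens : Ω → Bool)
    (hym : Measurable yhat) (hcm : Measurable chat) (hsm : Measurable sens)
    (hy01 : ∀ ω, yhat ω ∈ Set.Icc (0 : ℝ) 1)
    (hci : ProbabilityTheory.CondIndepFun (MeasurableSpace.comap yhat inferInstance)
      hym.comap_le chat sens μ)
    (hcond : μ[(fun ω => if chat ω = true then (1 : ℝ) else 0) |
        MeasurableSpace.comap yhat inferInstance] =ᵐ[μ] yhat)
    (hs0 : 0 < μ {ω | sens ω = false}) :
    (μ ({ω | chat ω = true} ∩ {ω | sens ω = false})).toReal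
        / (μ {ω | sens ω = false}).toReal
      = (∫ ω in {ω | sens ω = false}, yhat ω ∂μ) / (μ {ω | sens ω = false}).toReal := by
  have hm' : MeasurableSpace.comap yhat inferInstance ≤ _ := hym.comap_le
  have hA : MeasurableSet (chat ⁻¹' {true}) := hcm (measurableSet_singleton true)
  have hB : MeasurableSet (sens ⁻¹' {false}) := hsm (measurableSet_singleton false)
  have hAeq : {ω | chat ω = true} = chat ⁻¹' {true} := rfl
  have hBeq : {ω | sens ω = false} = sens ⁻¹' {false} := rfl
  -- integrability of bounded measurable functions
  have hbdd : ∀ f : Ω → ℝ, Measurable f → (∀ ω, |f ω| ≤ 1) → Integrable f μ := by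
    intro f hf hb
    exact (integrable_const (1 : ℝ)).mono' hf.aestronglyMeasurable (ae_of_all _ hb)
  have hintAB : Integrable ((chat ⁻¹' {true} ∩ sens ⁻¹' {false}).indicator
      (fun _ => (1 : ℝ))) μ := by
    refine hbdd _ (measurable_const.indicator (hA.inter hB)) fun ω => ?_
    by_cases h : ω ∈ chat ⁻¹' {true} ∩ sens ⁻¹' {false} <;> simp [h]
  have hintB : Integrable ((sens ⁻¹' {false}).indicator (fun _ => (1 : ℝ))) μ := by
    refine hbdd _ (measurable_const.indicator hB) fun ω => ?_
    by_cases h : ω ∈ sens ⁻¹' {false} <;> simp [h]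
  have hintyB : Integrable (fun ω => yhat ω *
      (sens ⁻¹' {false}).indicator (fun _ => (1 : ℝ)) ω) μ := by
    refine hbdd _ (hym.mul (measurable_const.indicator hB)) fun ω => ?_
    have h0 := (hy01 ω).1
    have h1 := (hy01 ω).2
    by_cases h : ω ∈ sens ⁻¹' {false} <;> simp [h]
    rw [abs_of_nonneg h0]; exact h1
  -- conditional independence factorization
  have hfact := (ProbabilityTheory.condIndepFun_iff_condExp_inter_preimage_eq_mul
      (hm' := hym.comap_le) hcm hsm).mp hci {true} {false}
      (measurableSet_singleton true) (measurableSet_singleton false)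
  -- the indicator of {chat = true} is the if-then-else function
  have hindA : (chat ⁻¹' {true}).indicator (fun _ => (1 : ℝ))
      = fun ω => if chat ω = true then (1 : ℝ) else 0 := by
    funext ω
    by_cases h : chat ω = true <;> simp [Set.indicator, h]
  have hcondA : (μ⟦chat ⁻¹' {true} | MeasurableSpace.comap yhat inferInstance⟧) =ᵐ[μ] yhat := by
    rw [show (Set.indicator (chat ⁻¹' {true}) fun _ => (1:ℝ))
      = fun ω => if chat ω = true then (1 : ℝ) else 0 from hindA]
    exact hcond
  -- yhat is m'-strongly measurable
  have hy_sm : StronglyMeasurable[MeasurableSpace.comap yhat inferInstance] yhat :=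
    (Measurable.of_comap_le le_rfl).stronglyMeasurable
  have key : (μ ({ω | chat ω = true} ∩ {ω | sens ω = false})).toReal
      = ∫ ω in {ω | sens ω = false}, yhat ω ∂μ := by
    rw [hAeq, hBeq]
    calc (μ (chat ⁻¹' {true} ∩ sens ⁻¹' {false})).toReal
        = ∫ ω, (chat ⁻¹' {true} ∩ sens ⁻¹' {false}).indicator (fun _ => (1 : ℝ)) ω ∂μ :=
          (integral_indicator_one (hA.inter hB)).symm
      _ = ∫ ω, (μ⟦chat ⁻¹' {true} ∩ sens ⁻¹' {false} |
            MeasurableSpace.comap yhat inferInstance⟧) ω ∂μ :=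
          (integral_condExp hym.comap_le).symm
      _ = ∫ ω, yhat ω *
            (μ⟦sens ⁻¹' {false} | MeasurableSpace.comap yhat inferInstance⟧) ω ∂μ := by
          refine integral_congr_ae (hfact.trans ?_)
          filter_upwards [hcondA] with ω hω
          rw [hω]
      _ = ∫ ω, (μ[(fun ω => yhat ω *
            (sens ⁻¹' {false}).indicator (fun _ => (1 : ℝ)) ω) |
            MeasurableSpace.comap yhat inferInstance]) ω ∂μ := by
          refine integral_congr_ae ?_
          exact (condExp_mul_of_stronglyMeasurable_left (μ := μ) hy_sm hintyB hintB).symm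
      _ = ∫ ω, yhat ω * (sens ⁻¹' {false}).indicator (fun _ => (1 : ℝ)) ω ∂μ :=
          integral_condExp hym.comap_le
      _ = ∫ ω in sens ⁻¹' {false}, yhat ω ∂μ := by
          rw [← integral_indicator hB]
          congr 1
          funext ω
          by_cases h : ω ∈ sens ⁻¹' {false} <;> simp [h]
  rw [key]
end

section
/- Let V be a finite set of nodes partitioned by a binary sensitive attribute s : V → {0,1} into nonempty groups S₀ and S₁, with input features x_j ∈ ℝ^F. Let each node k have a nonempty neighborhood N(k) ⊆ V and attention coefficients α_{kj} ≥ 0 for j ∈ N(k) with Σ_{j∈N(k)} α_{kj} = 1. Consider a network consisting of a single GAT layer followed by a fully connected layer: c_j = W⁰ x_j ∈ ℝ^{F₁}, z¹_k = Σ_{j∈N(k)} α_{kj} c_j, h¹_k = σ(z¹_k), then z²_k = W¹ h¹_k ∈ ℝ^{F₂} and ŷ_k = σ(z²_k), where σ : ℝ → ℝ is L-Lipschitz and applied entrywise. Let S^χ be the set of nodes having at least one neighbor of the opposite sensitive group, R_s^χ = |S_s ∩ S^χ|/|S_s|. Assume ‖c_j − c̄_{s(j)}‖_∞ ≤ Δc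 and ‖z¹_j − z̄¹_{s(j)}‖_∞ ≤ Δz¹ and ‖z²_j − z̄²_{s(j)}‖_∞ ≤ Δz² for all j ∈ V (group means taken within each sensitive group), and assume there exists α^χ ∈ [0,1] such that for every k ∈ S^χ, Σ_{j∈N(k), s(j)≠s(k)} α_{kj} = α^χ. Then the output disparity δ_ŷ = ‖mean_{S₀} ŷ − mean_{S₁} ŷ‖₂ satisfies δ_ŷ ≤ L ( σmax(W¹) · L ( σmax(W⁰) · |(R₁^χ + R₀^χ) α^χ − 1| · δ_x + 2√(F₁) Δc + 2√(F₁) Δz¹ ) + 2√(F₂) Δz² ), where δ_x = ‖mean_{S₀} x − mean_{S₁} x‖₂. -/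
open Finset

lemma gmean_map {V : Type*} {d e : ℕ} (S : Finset V) (x : V → EuclideanSpace ℝ (Fin d))
    (W : EuclideanSpace ℝ (Fin d) →L[ℝ] EuclideanSpace ℝ (Fin e)) :
    gmean S (fun j => W (x j)) = W (gmean S x) := by
  simp [gmean, map_smul, map_sum]

lemma sqF_bound {d : ℕ} (w : EuclideanSpace ℝ (Fin d)) (Δ : ℝ) (h : ∀ i, |w i| ≤ Δ) :
    ‖w‖ ≤ Real.sqrt d * Δ := by
  rcases Nat.eq_zero_or_pos d with hd | hd
  · subst hd
    simp [EuclideanSpace.norm_eq]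
  · have hΔ : 0 ≤ Δ := le_trans (abs_nonneg _) (h ⟨0, hd⟩)
    rw [EuclideanSpace.norm_eq]
    have h1 : ∑ i, ‖w i‖ ^ 2 ≤ (d : ℝ) * Δ ^ 2 := by
      calc ∑ i, ‖w i‖ ^ 2 ≤ ∑ _i : Fin d, Δ ^ 2 := by
            apply Finset.sum_le_sum
            intro i _
            have := h i
            simp only [Real.norm_eq_abs]
            nlinarith [abs_nonneg (w i)]
          _ = (d : ℝ) * Δ ^ 2 := by simp [mul_comm]
    calc Real.sqrt (∑ i, ‖w i‖ ^ 2) ≤ Real.sqrt ((d:ℝ) * Δ ^ 2) := Real.sqrt_le_sqrt h1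
      _ = Real.sqrt d * Δ := by
        rw [Real.sqrt_mul (by positivity), Real.sqrt_sq hΔ]

noncomputable def emap {d : ℕ} (σ : ℝ → ℝ) (u : EuclideanSpace ℝ (Fin d)) :
    EuclideanSpace ℝ (Fin d) := WithLp.toLp 2 (fun i => σ (u i))

@[simp] lemma emap_apply {d : ℕ} (σ : ℝ → ℝ) (u : EuclideanSpace ℝ (Fin d)) (i : Fin d) :
    emap σ u i = σ (u i) := rfl

lemma lip_vec {d : ℕ} (σ : ℝ → ℝ) (L : ℝ) (hL : 0 ≤ L)
    (hσ : ∀ a b, |σ a - σ b| ≤ L * |a - b|)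
    (u v : EuclideanSpace ℝ (Fin d)) :
    ‖emap σ u - emap σ v‖ ≤ L * ‖u - v‖ := by
  have h1 : ∀ i : Fin d, ‖(emap σ u - emap σ v) i‖ ^ 2 ≤ L ^ 2 * ‖(u - v) i‖ ^ 2 := by
    intro i
    have := hσ (u i) (v i)
    have h2 : (u - v) i = u i - v i := rfl
    have h3 : (emap σ u - emap σ v) i = σ (u i) - σ (v i) := rfl
    rw [h2, h3]
    simp only [Real.norm_eq_abs]
    nlinarith [abs_nonneg (σ (u i) - σ (v i)), abs_nonneg (u i - v i)]
  calc ‖emap σ u - emap σ v‖ = Real.sqrt (∑ i, ‖(emap σ u - emap σ v) i‖ ^ 2) :=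
        EuclideanSpace.norm_eq _
    _ ≤ Real.sqrt (∑ i, L ^ 2 * ‖(u - v) i‖ ^ 2) := by
        apply Real.sqrt_le_sqrt; exact Finset.sum_le_sum fun i _ => h1 i
    _ = L * Real.sqrt (∑ i, ‖(u - v) i‖ ^ 2) := by
        rw [← Finset.mul_sum, Real.sqrt_mul (by positivity), Real.sqrt_sq hL]
    _ = L * ‖u - v‖ := congrArg (L * ·) (EuclideanSpace.norm_eq (u - v)).symm

lemma mean_sub_mean {V : Type*} {S : Finset V} (hS : S.Nonempty) (f g : V → ℝ) (Δ : ℝ)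
    (h : ∀ j ∈ S, |f j - g j| ≤ Δ) :
    |(S.card : ℝ)⁻¹ * ∑ j ∈ S, f j - (S.card : ℝ)⁻¹ * ∑ j ∈ S, g j| ≤ Δ := by
  have hc : (0:ℝ) < S.card := by exact_mod_cast Finset.card_pos.mpr hS
  have key : (S.card : ℝ)⁻¹ * ∑ j ∈ S, f j - (S.card : ℝ)⁻¹ * ∑ j ∈ S, g j
      = (S.card : ℝ)⁻¹ * ∑ j ∈ S, (f j - g j) := by
    rw [Finset.sum_sub_distrib]; ring
  rw [key, abs_mul, abs_inv, abs_of_pos hc]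
  have h2 : |∑ j ∈ S, (f j - g j)| ≤ (S.card : ℝ) * Δ := by
    calc |∑ j ∈ S, (f j - g j)| ≤ ∑ j ∈ S, |f j - g j| := Finset.abs_sum_le_sum_abs _ _
      _ ≤ ∑ _j ∈ S, Δ := Finset.sum_le_sum h
      _ = (S.card : ℝ) * Δ := by rw [Finset.sum_const, nsmul_eq_mul]
  calc (S.card:ℝ)⁻¹ * |∑ j ∈ S, (f j - g j)| ≤ (S.card:ℝ)⁻¹ * ((S.card:ℝ) * Δ) := by
        apply mul_le_mul_of_nonneg_left h2 (by positivity)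
    _ = Δ := by field_simp

lemma convex_sum_bound {V : Type*} {S : Finset V} (a e : V → ℝ)
    (hnn : ∀ j ∈ S, 0 ≤ a j) (hs : ∑ j ∈ S, a j = 1) (Δ : ℝ)
    (h : ∀ j ∈ S, |e j| ≤ Δ) : |∑ j ∈ S, a j * e j| ≤ Δ := by
  calc |∑ j ∈ S, a j * e j| ≤ ∑ j ∈ S, |a j * e j| := Finset.abs_sum_le_sum_abs _ _
    _ ≤ ∑ j ∈ S, a j * Δ := by
        apply Finset.sum_le_sum
        intro j hj
        rw [abs_mul, abs_of_nonneg (hnn j hj)]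
        exact mul_le_mul_of_nonneg_left (h j hj) (hnn j hj)
    _ = Δ := by rw [← Finset.sum_mul, hs, one_mul]

lemma fin2_cases (v : Fin 2) : v = 0 ∨ v = 1 := by fin_cases v <;> simp

lemma mem_grp {V : Type*} [Fintype V] {s : V → Fin 2} {t : Fin 2} {k : V} :
    k ∈ grp s t ↔ s k = t := by simp [grp]

lemma act_layer {V : Type*} {d : ℕ} (S : Finset V) (hS : S.Nonempty)
    (σ : ℝ → ℝ) (L : ℝ) (hL : 0 ≤ L) (hσ : ∀ a b, |σ a - σ b| ≤ L * |a - b|)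
    (z h : V → EuclideanSpace ℝ (Fin d)) (hh : ∀ k i, h k i = σ (z k i)) (Δ : ℝ)
    (hΔ : ∀ j ∈ S, ∀ i, |z j i - gmean S z i| ≤ Δ) :
    ‖gmean S h - emap σ (gmean S z)‖ ≤ Real.sqrt d * (L * Δ) := by
  apply sqF_bound
  intro i
  have e : (gmean S h - emap σ (gmean S z)) i = gmean S h i - σ (gmean S z i) := rfl
  rw [e, gmean_apply]
  have e2 : σ (gmean S z i) = (S.card : ℝ)⁻¹ * ∑ _j ∈ S, σ (gmean S z i) := by
    rw [Finset.sum_const, nsmul_eq_mul]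
    have hc : (0:ℝ) < S.card := by exact_mod_cast Finset.card_pos.mpr hS
    field_simp
  rw [e2]
  apply mean_sub_mean hS
  intro j hj
  calc |h j i - σ (gmean S z i)| = |σ (z j i) - σ (gmean S z i)| := by rw [hh]
    _ ≤ L * |z j i - gmean S z i| := hσ _ _
    _ ≤ L * Δ := mul_le_mul_of_nonneg_left (hΔ j hj i) hL

lemma gat_step {V : Type*} [Fintype V] [DecidableEq V]
    (s : V → Fin 2) (t t' : Fin 2) (htt' : ∀ v : Fin 2, v ≠ t → v = t')
    (hSt : (grp s t).Nonempty)
    (N : V → Finset V) (α : V → V → ℝ) (hαnn : ∀ k, ∀ j ∈ N k, 0 ≤ α k j)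
    (hαsum : ∀ k, ∑ j ∈ N k, α k j = 1)
    {F₁ : ℕ}
    (c : V → EuclideanSpace ℝ (Fin F₁))
    (z₁ : V → EuclideanSpace ℝ (Fin F₁)) (hz₁ : ∀ k, z₁ k = ∑ j ∈ N k, α k j • c j)
    (Δc : ℝ) (hΔc : ∀ j, ∀ i, |c j i - gmean (grp s (s j)) c i| ≤ Δc)
    (Sχ : Finset V) (hSχ : ∀ k, k ∈ Sχ ↔ ∃ j ∈ N k, s j ≠ s k)
    (αχ : ℝ)
    (hA2 : ∀ k ∈ Sχ, ∑ j ∈ (N k).filter (fun j => s j ≠ s k), α k j = αχ) (i : Fin F₁) :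
    |gmean (grp s t) z₁ i -
      (gmean (grp s t) c i + ((grp s t ∩ Sχ).card : ℝ) / ((grp s t).card : ℝ) * αχ *
        (gmean (grp s t') c i - gmean (grp s t) c i))| ≤ Δc := by
  set Gt := grp s t with hGt
  set X := gmean (grp s t) c i with hX
  set Y := gmean (grp s t') c i with hY
  set a : V → ℝ := fun k => ∑ j ∈ (N k).filter (fun j => s j ≠ s k), α k j with ha
  set g : V → ℝ := fun k => X + a k * (Y - X) with hg
  -- Step A: per-node bound
  have stepA : ∀ k ∈ Gt, |z₁ k i - g k| ≤ Δc := by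
    intro k hk
    have hsk : s k = t := mem_grp.mp hk
    have hzi : z₁ k i = ∑ j ∈ N k, α k j * c j i := by
      rw [hz₁ k, esum_apply]
      exact Finset.sum_congr rfl fun j _ => rfl
    have hdecomp : z₁ k i - g k
        = ∑ j ∈ N k, α k j * (c j i - gmean (grp s (s j)) c i) := by
      rw [hzi]
      have hsplit := Finset.sum_filter_add_sum_filter_not (N k)
        (fun j => s j ≠ s k) (fun j => α k j * gmean (grp s (s j)) c i)
      have hsplitα := Finset.sum_filter_add_sum_filter_not (N k)
        (fun j => s j ≠ s k) (fun j => α k j)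
      have hop : ∑ j ∈ (N k).filter (fun j => s j ≠ s k),
          α k j * gmean (grp s (s j)) c i
          = a k * Y := by
        rw [ha]
        rw [Finset.sum_mul]
        apply Finset.sum_congr rfl
        intro j hj
        have hsj : s j ≠ s k := (Finset.mem_filter.mp hj).2
        have : s j = t' := htt' _ (by rw [← hsk]; exact hsj)
        rw [this, hY]
      have hsame : ∑ j ∈ (N k).filter (fun j => ¬ s j ≠ s k),
          α k j * gmean (grp s (s j)) c i
          = (1 - a k) * X := by
        have h1 : ∑ j ∈ (N k).filter (fun j => ¬ s j ≠ s k), α k j = 1 - a k := by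
          have := hαsum k
          rw [ha]
          linarith [hsplitα.symm ▸ this]
        rw [← h1, Finset.sum_mul]
        apply Finset.sum_congr rfl
        intro j hj
        have hsj : s j = s k := not_not.mp (Finset.mem_filter.mp hj).2
        rw [hsj, hsk, hX]
      have hmeansum : ∑ j ∈ N k, α k j * gmean (grp s (s j)) c i
          = (1 - a k) * X + a k * Y := by
        rw [← hsplit, hop, hsame]
        ring
      have expand : ∑ j ∈ N k, α k j * (c j i - gmean (grp s (s j)) c i)
          = (∑ j ∈ N k, α k j * c j i) - ∑ j ∈ N k, α k j * gmean (grp s (s j)) c i := by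
        rw [← Finset.sum_sub_distrib]
        apply Finset.sum_congr rfl
        intro j _
        ring
      rw [expand, hmeansum, hg]
      ring
    rw [hdecomp]
    exact convex_sum_bound _ _ (hαnn k) (hαsum k) Δc (fun j _ => hΔc j i)
  -- Step B: average of g
  have hcard : (0:ℝ) < Gt.card := by exact_mod_cast Finset.card_pos.mpr hSt
  have hsuma : ∑ k ∈ Gt, a k = αχ * ((Gt ∩ Sχ).card : ℝ) := by
    have h1 : ∀ k ∈ Gt, a k = if k ∈ Sχ then αχ else 0 := by
      intro k _
      by_cases hk : k ∈ Sχ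
      · simp only [hk, if_true]; exact hA2 k hk
      · simp only [hk, if_false]
        rw [ha]
        have : (N k).filter (fun j => s j ≠ s k) = ∅ := by
          rw [Finset.filter_eq_empty_iff]
          intro j hj hne
          exact hk ((hSχ k).mpr ⟨j, hj, hne⟩)
        simp [this]
    rw [Finset.sum_congr rfl h1, Finset.sum_ite_mem, Finset.sum_const, nsmul_eq_mul]
    ring
  have stepB : (Gt.card : ℝ)⁻¹ * ∑ k ∈ Gt, g k
      = X + ((Gt ∩ Sχ).card : ℝ) / (Gt.card : ℝ) * αχ * (Y - X) := by
    have : ∑ k ∈ Gt, g k = (Gt.card : ℝ) * X + (∑ k ∈ Gt, a k) * (Y - X) := by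
      rw [hg]
      rw [Finset.sum_add_distrib, Finset.sum_const, nsmul_eq_mul, ← Finset.sum_mul]
    rw [this, hsuma]
    field_simp
  -- Step C
  have final := mean_sub_mean hSt (fun k => z₁ k i) g Δc stepA
  rw [gmean_apply]
  rw [stepB] at final
  exact final

/-- The composed bound of the Remark in Subsection 4.1 (equations (5)–(6)): for a network
consisting of a single GAT layer (weights `W₀`, attention `α`, activation `σ`) followed by a
fully connected layer (weights `W₁`, activation `σ`), the output disparity `δ_ŷ` is bounded by
chaining Theorem 1 with Lemma 1. The linear maps `W₀`, `W₁` between Euclidean spaces play the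
roles of the weight matrices and their operator norms are the largest singular values. -/
theorem composed_network_disparity_bound
    {V : Type*} [Fintype V] [DecidableEq V] {F F₁ F₂ : ℕ}
    (s : V → Fin 2)
    (hS₀ : (grp s 0).Nonempty) (hS₁ : (grp s 1).Nonempty)
    (x : V → EuclideanSpace ℝ (Fin F))
    (N : V → Finset V) (hN : ∀ k, (N k).Nonempty)
    (α : V → V → ℝ) (hαnn : ∀ k, ∀ j ∈ N k, 0 ≤ α k j)
    (hαsum : ∀ k, ∑ j ∈ N k, α k j = 1)
    (W₀ : EuclideanSpace ℝ (Fin F) →L[ℝ] EuclideanSpace ℝ (Fin F₁))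
    (W₁ : EuclideanSpace ℝ (Fin F₁) →L[ℝ] EuclideanSpace ℝ (Fin F₂))
    (σ : ℝ → ℝ) (L : ℝ) (hσ : ∀ a b, |σ a - σ b| ≤ L * |a - b|)
    (c : V → EuclideanSpace ℝ (Fin F₁)) (hc : ∀ j, c j = W₀ (x j))
    (z₁ : V → EuclideanSpace ℝ (Fin F₁)) (hz₁ : ∀ k, z₁ k = ∑ j ∈ N k, α k j • c j)
    (h₁ : V → EuclideanSpace ℝ (Fin F₁)) (hh₁ : ∀ k i, h₁ k i = σ (z₁ k i))
    (z₂ : V → EuclideanSpace ℝ (Fin F₂)) (hz₂ : ∀ k, z₂ k = W₁ (h₁ k))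
    (yhat : V → EuclideanSpace ℝ (Fin F₂)) (hyhat : ∀ k i, yhat k i = σ (z₂ k i))
    (Δc Δz₁ Δz₂ : ℝ)
    (hΔc : ∀ j, ∀ i, |c j i - gmean (grp s (s j)) c i| ≤ Δc)
    (hΔz₁ : ∀ j, ∀ i, |z₁ j i - gmean (grp s (s j)) z₁ i| ≤ Δz₁)
    (hΔz₂ : ∀ j, ∀ i, |z₂ j i - gmean (grp s (s j)) z₂ i| ≤ Δz₂)
    (Sχ : Finset V) (hSχ : ∀ k, k ∈ Sχ ↔ ∃ j ∈ N k, s j ≠ s k)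
    (αχ : ℝ) (hαχ0 : 0 ≤ αχ) (hαχ1 : αχ ≤ 1)
    (hA2 : ∀ k ∈ Sχ, ∑ j ∈ (N k).filter (fun j => s j ≠ s k), α k j = αχ) :
    ‖gmean (grp s 0) yhat - gmean (grp s 1) yhat‖ ≤
      L * (‖W₁‖ *
            (L * (‖W₀‖ *
                |(((grp s 1 ∩ Sχ).card : ℝ) / ((grp s 1).card : ℝ)
                    + ((grp s 0 ∩ Sχ).card : ℝ) / ((grp s 0).card : ℝ)) * αχ - 1|
                * ‖gmean (grp s 0) x - gmean (grp s 1) x‖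
              + 2 * Real.sqrt F₁ * Δc + 2 * Real.sqrt F₁ * Δz₁))
          + 2 * Real.sqrt F₂ * Δz₂) := by
  have hL : 0 ≤ L := by
    have h := hσ 0 1
    have h2 := abs_nonneg (σ 0 - σ 1)
    simp at h
    linarith
  have hW1 : 0 ≤ ‖W₁‖ := norm_nonneg _
  set G₀ := grp s 0 with hG₀
  set G₁ := grp s 1 with hG₁
  set R₀ : ℝ := ((G₀ ∩ Sχ).card : ℝ) / (G₀.card : ℝ) with hR₀
  set R₁ : ℝ := ((G₁ ∩ Sχ).card : ℝ) / (G₁.card : ℝ) with hR₁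
  set δx := ‖gmean G₀ x - gmean G₁ x‖ with hδx
  set cb0 := gmean G₀ c with hcb0
  set cb1 := gmean G₁ c with hcb1
  set zb0 := gmean G₀ z₁ with hzb0
  set zb1 := gmean G₁ z₁ with hzb1
  set hb0 := gmean G₀ h₁ with hhb0
  set hb1 := gmean G₁ h₁ with hhb1
  set z2b0 := gmean G₀ z₂ with hz2b0
  set z2b1 := gmean G₁ z₂ with hz2b1
  have tri : ∀ {d : ℕ} (a b e : EuclideanSpace ℝ (Fin d)), ‖a - e‖ ≤ ‖a - b‖ + ‖b - e‖ := by
    intro d a b e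
    simpa [dist_eq_norm] using dist_triangle a b e
  have key0 := gat_step s 0 1 (by decide) hS₀ N α hαnn hαsum c z₁ hz₁ Δc hΔc Sχ hSχ αχ hA2
  have key1 := gat_step s 1 0 (by decide) hS₁ N α hαnn hαsum c z₁ hz₁ Δc hΔc Sχ hSχ αχ hA2
  -- Step 1: GAT layer bound on group mean difference of z₁
  set B₀ : ℝ := ‖W₀‖ * |(R₁ + R₀) * αχ - 1| * δx + 2 * Real.sqrt F₁ * Δc with hB₀
  have step1 : ‖zb0 - zb1‖ ≤ B₀ := by
    set coef : ℝ := 1 - (R₁ + R₀) * αχ with hcoef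
    set u : EuclideanSpace ℝ (Fin F₁) := coef • (cb0 - cb1) with hu
    have h_err : ‖(zb0 - zb1) - u‖ ≤ Real.sqrt F₁ * (2 * Δc) := by
      apply sqF_bound
      intro i
      have e : ((zb0 - zb1) - u) i
          = (zb0 i - (cb0 i + R₀ * αχ * (cb1 i - cb0 i)))
            - (zb1 i - (cb1 i + R₁ * αχ * (cb0 i - cb1 i))) := by
        show (zb0 i - zb1 i) - coef * (cb0 i - cb1 i) = _
        rw [hcoef]; ring
      rw [e]
      have k0 := key0 i
      have k1 := key1 i
      rw [abs_le] at k0 k1 ⊢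
      constructor <;> [linarith [k0.1, k1.2]; linarith [k0.2, k1.1]]
    have h_u : ‖u‖ ≤ |(R₁ + R₀) * αχ - 1| * (‖W₀‖ * δx) := by
      have hc' : c = fun j => W₀ (x j) := funext hc
      have hcbd : cb0 - cb1 = W₀ (gmean G₀ x - gmean G₁ x) := by
        rw [hcb0, hcb1, hc', gmean_map, gmean_map, map_sub]
      have : ‖u‖ = |coef| * ‖cb0 - cb1‖ := by
        rw [hu, norm_smul, Real.norm_eq_abs]
      rw [this, hcbd]
      have habs : |coef| = |(R₁ + R₀) * αχ - 1| := by
        rw [hcoef, abs_sub_comm]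
      rw [habs]
      exact mul_le_mul_of_nonneg_left (W₀.le_opNorm _) (abs_nonneg _)
    calc ‖zb0 - zb1‖ = ‖u + ((zb0 - zb1) - u)‖ := by rw [add_sub_cancel]
      _ ≤ ‖u‖ + ‖(zb0 - zb1) - u‖ := norm_add_le _ _
      _ ≤ |(R₁ + R₀) * αχ - 1| * (‖W₀‖ * δx) + Real.sqrt F₁ * (2 * Δc) := by
          linarith
      _ = B₀ := by rw [hB₀]; ring
  -- Step 2: activation after GAT layer
  have hb0σ : ‖hb0 - emap σ zb0‖ ≤ Real.sqrt F₁ * (L * Δz₁) := by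
    apply act_layer G₀ hS₀ σ L hL hσ z₁ h₁ hh₁ Δz₁
    intro j hj i
    have hsj : s j = 0 := mem_grp.mp hj
    have := hΔz₁ j i
    rwa [hsj] at this
  have hb1σ : ‖hb1 - emap σ zb1‖ ≤ Real.sqrt F₁ * (L * Δz₁) := by
    apply act_layer G₁ hS₁ σ L hL hσ z₁ h₁ hh₁ Δz₁
    intro j hj i
    have hsj : s j = 1 := mem_grp.mp hj
    have := hΔz₁ j i
    rwa [hsj] at this
  have lip1 : ‖emap σ zb0 - emap σ zb1‖ ≤ L * ‖zb0 - zb1‖ := lip_vec σ L hL hσ _ _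
  have step2 : ‖hb0 - hb1‖ ≤ L * (B₀ + 2 * Real.sqrt F₁ * Δz₁) := by
    have t1 : ‖hb0 - hb1‖ ≤ ‖hb0 - emap σ zb0‖ + ‖emap σ zb0 - emap σ zb1‖
        + ‖emap σ zb1 - hb1‖ := by
      calc ‖hb0 - hb1‖ ≤ ‖hb0 - emap σ zb0‖ + ‖emap σ zb0 - hb1‖ := tri _ _ _
        _ ≤ ‖hb0 - emap σ zb0‖ + (‖emap σ zb0 - emap σ zb1‖ + ‖emap σ zb1 - hb1‖) := by
            linarith [tri (emap σ zb0) (emap σ zb1) hb1]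
        _ = _ := by ring
    have t2 : ‖emap σ zb1 - hb1‖ = ‖hb1 - emap σ zb1‖ := norm_sub_rev _ _
    have t3 : L * ‖zb0 - zb1‖ ≤ L * B₀ := mul_le_mul_of_nonneg_left step1 hL
    calc ‖hb0 - hb1‖ ≤ Real.sqrt F₁ * (L * Δz₁) + L * B₀ + Real.sqrt F₁ * (L * Δz₁) := by
          linarith
      _ = L * (B₀ + 2 * Real.sqrt F₁ * Δz₁) := by ring
  -- Step 3: second linear layer
  have hz₂' : z₂ = fun k => W₁ (h₁ k) := funext hz₂
  have hz2bm0 : z2b0 = W₁ hb0 := by rw [hz2b0, hhb0, hz₂', gmean_map]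
  have hz2bm1 : z2b1 = W₁ hb1 := by rw [hz2b1, hhb1, hz₂', gmean_map]
  have step3 : ‖z2b0 - z2b1‖ ≤ ‖W₁‖ * (L * (B₀ + 2 * Real.sqrt F₁ * Δz₁)) := by
    calc ‖z2b0 - z2b1‖ = ‖W₁ (hb0 - hb1)‖ := by rw [hz2bm0, hz2bm1, map_sub]
      _ ≤ ‖W₁‖ * ‖hb0 - hb1‖ := W₁.le_opNorm _
      _ ≤ ‖W₁‖ * (L * (B₀ + 2 * Real.sqrt F₁ * Δz₁)) :=
          mul_le_mul_of_nonneg_left step2 hW1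
  -- Step 4: final activation
  have yb0σ : ‖gmean G₀ yhat - emap σ z2b0‖ ≤ Real.sqrt F₂ * (L * Δz₂) := by
    apply act_layer G₀ hS₀ σ L hL hσ z₂ yhat hyhat Δz₂
    intro j hj i
    have hsj : s j = 0 := mem_grp.mp hj
    have := hΔz₂ j i
    rwa [hsj] at this
  have yb1σ : ‖gmean G₁ yhat - emap σ z2b1‖ ≤ Real.sqrt F₂ * (L * Δz₂) := by
    apply act_layer G₁ hS₁ σ L hL hσ z₂ yhat hyhat Δz₂
    intro j hj i
    have hsj : s j = 1 := mem_grp.mp hj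
    have := hΔz₂ j i
    rwa [hsj] at this
  have lip2 : ‖emap σ z2b0 - emap σ z2b1‖ ≤ L * ‖z2b0 - z2b1‖ := lip_vec σ L hL hσ _ _
  have t4 : L * ‖z2b0 - z2b1‖ ≤ L * (‖W₁‖ * (L * (B₀ + 2 * Real.sqrt F₁ * Δz₁))) :=
    mul_le_mul_of_nonneg_left step3 hL
  have tfin : ‖gmean G₀ yhat - gmean G₁ yhat‖
      ≤ ‖gmean G₀ yhat - emap σ z2b0‖ + ‖emap σ z2b0 - emap σ z2b1‖
        + ‖emap σ z2b1 - gmean G₁ yhat‖ := by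
    calc ‖gmean G₀ yhat - gmean G₁ yhat‖
        ≤ ‖gmean G₀ yhat - emap σ z2b0‖ + ‖emap σ z2b0 - gmean G₁ yhat‖ := tri _ _ _
      _ ≤ _ := by
          linarith [tri (emap σ z2b0) (emap σ z2b1) (gmean G₁ yhat)]
  have t5 : ‖emap σ z2b1 - gmean G₁ yhat‖ = ‖gmean G₁ yhat - emap σ z2b1‖ := norm_sub_rev _ _
  calc ‖gmean G₀ yhat - gmean G₁ yhat‖
      ≤ Real.sqrt F₂ * (L * Δz₂) + L * (‖W₁‖ * (L * (B₀ + 2 * Real.sqrt F₁ * Δz₁)))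
        + Real.sqrt F₂ * (L * Δz₂) := by linarith
    _ = L * (‖W₁‖ * (L * (‖W₀‖ * |(R₁ + R₀) * αχ - 1| * δx
          + 2 * Real.sqrt F₁ * Δc + 2 * Real.sqrt F₁ * Δz₁)) + 2 * Real.sqrt F₂ * Δz₂) := by
        rw [hB₀]; ring
end
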